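/- arXiv:2111.09359 — 8 statements merged into one kernel-verified Lean document; each statement's English description precedes it below -/
import Mathlib

section
/- Let f_m(x) and g_m(u) (m ≥ 0) be two sequences of functions, and x_1,…,x_n, u_1,…,u_n indeterminates/elements such that all the series h(i,j) = Σ_{m≥0} f_m(x_i) g_m(u_j) converge (e.g. in a ring of formal power series). Then Σ_λ det[f_{λ_j+n−j}(x_i)]_{i,j=1}^n · det[g_{λ_j+n−j}(u_i)]_{i,j=1}^n = det[h(i,j)]_{i,j=1}^n, where the sum ranges over all partitions λ of length at most n. -/
open Filter Topology

-- Lemma A: product of sums = sum of products over pi type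
lemma pi_hasSum_prod {R : Type*} [CommRing R] [TopologicalSpace R] [IsTopologicalRing R]
    [T2Space R] {n : ℕ} (b : Fin n → ℕ → R) (t : Fin n → R)
    (hb : ∀ i, HasSum (b i) (t i))
    (hS : Summable fun l : Fin n → ℕ => ∏ i, b i (l i)) :
    HasSum (fun l : Fin n → ℕ => ∏ i, b i (l i)) (∏ i, t i) := by
  obtain ⟨S, hSsum⟩ := hS
  have hcof : Tendsto (fun s : Fin n → Finset ℕ => Fintype.piFinset s) atTop atTop := by
    apply tendsto_atTop_atTop_of_monotone
    · intro s s' hss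
      exact Fintype.piFinset_subset _ _ fun i => Pi.le_def.mp hss i
    · intro u
      refine ⟨fun i => u.image (fun l => l i), fun l hl => ?_⟩
      rw [Fintype.mem_piFinset]
      exact fun i => Finset.mem_image_of_mem _ hl
  have h1 : Tendsto (fun s : Fin n → Finset ℕ => ∑ l ∈ Fintype.piFinset s, ∏ i, b i (l i))
      atTop (𝓝 S) := hSsum.comp hcof
  have h2 : Tendsto (fun s : Fin n → Finset ℕ => ∏ i, ∑ m ∈ s i, b i m) atTop (𝓝 (∏ i, t i)) := by
    apply tendsto_finset_prod
    intro i _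
    have heval : Tendsto (fun s : Fin n → Finset ℕ => s i) atTop atTop := by
      apply tendsto_atTop_atTop_of_monotone (fun s s' h => Pi.le_def.mp h i)
      intro u
      exact ⟨fun _ => u, le_refl u⟩
    exact (hb i).comp heval
  have h2' : Tendsto (fun s : Fin n → Finset ℕ => ∑ l ∈ Fintype.piFinset s, ∏ i, b i (l i))
      atTop (𝓝 (∏ i, t i)) := by
    convert h2 using 2 with s
    rw [Finset.prod_univ_sum]
  have : S = ∏ i, t i := tendsto_nhds_unique h1 h2'
  exact this ▸ hSsum

-- Lemma B: collapse a finite second factor of a HasSum over a product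
lemma hasSum_prod_fintype {α γ R : Type*} [Fintype γ] [AddCommMonoid R] [TopologicalSpace R]
    {F : α × γ → R} {s : R} (h : HasSum F s) :
    HasSum (fun a : α => ∑ c : γ, F (a, c)) s := by
  classical
  have hcof : Tendsto (fun u : Finset α => u ×ˢ (Finset.univ : Finset γ)) atTop atTop := by
    apply tendsto_atTop_atTop_of_monotone
    · intro u u' huu
      exact Finset.product_subset_product huu (le_refl _)
    · intro b
      exact ⟨b.image Prod.fst, fun p hp => Finset.mem_product.2
        ⟨Finset.mem_image_of_mem _ hp, Finset.mem_univ _⟩⟩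
  exact (h.comp hcof).congr fun u => Finset.sum_product _ _ _

-- aux2 : strict mono increments
lemma strictMono_nat_gap {n : ℕ} {w : Fin n → ℕ} (hw : StrictMono w) :
    ∀ a b : Fin n, b ≤ a → (a : ℕ) + w b ≤ (b : ℕ) + w a := by
  intro a b hba
  obtain ⟨k, hk⟩ : ∃ k, (a : ℕ) = (b : ℕ) + k := ⟨(a : ℕ) - b, by omega⟩
  clear hba
  induction k generalizing a with
  | zero => have : a = b := Fin.ext (by omega); subst this; omega
  | succ k ih =>
      have ha' : ((b : ℕ) + k) < n := by have := a.isLt; omega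
      have h1 := ih ⟨(b : ℕ) + k, ha'⟩ rfl
      have h2 : (⟨(b : ℕ) + k, ha'⟩ : Fin n) < a := by
        simp only [Fin.lt_def]; omega
      have := hw h2
      simp only [Fin.val_mk] at h1 ⊢
      omega

lemma strictAnti_d {n : ℕ} {l : Fin n → ℕ} (hl : ∀ i j : Fin n, i ≤ j → l j ≤ l i) :
    StrictAnti (fun j : Fin n => l j + (n - 1 - (j : ℕ))) := by
  intro i j hij
  have h1 := hl i j (le_of_lt hij)
  have h2 : (i : ℕ) < (j : ℕ) := hij
  have h3 := j.isLt
  dsimp only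
  omega

lemma exists_decomp {n : ℕ} (v : Fin n → ℕ) (hv : Function.Injective v) :
    ∃ (l : {l : Fin n → ℕ // ∀ i j : Fin n, i ≤ j → l j ≤ l i}) (τ : Equiv.Perm (Fin n)),
      v = fun i => l.1 (τ i) + (n - 1 - ((τ i : ℕ))) := by
  classical
  set w : Fin n → ℕ := v ∘ Tuple.sort v with hw
  have hwmono : StrictMono w :=
    (Tuple.monotone_sort v).strictMono_of_injective (hv.comp (Tuple.sort v).injective)
  set d : Fin n → ℕ := fun j => w (Fin.rev j) with hd
  have hdge : ∀ j : Fin n, n - 1 - (j : ℕ) ≤ d j := by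
    intro j
    have hz : (0 : ℕ) < n := j.pos
    have key := strictMono_nat_gap hwmono (Fin.rev j) ⟨0, hz⟩ (by simp [Fin.le_def])
    have hval : ((Fin.rev j : Fin n) : ℕ) = n - 1 - (j : ℕ) := by
      rw [Fin.val_rev]; omega
    have hdj : d j = w (Fin.rev j) := rfl
    simp only [Fin.val_mk] at key
    omega
  set l : Fin n → ℕ := fun j => d j - (n - 1 - (j : ℕ)) with hldef
  have hdl : ∀ j, d j = l j + (n - 1 - (j : ℕ)) := fun j => by
    have := hdge j; simp only [hldef]; omega
  have hl : ∀ i j : Fin n, i ≤ j → l j ≤ l i := by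
    intro i j hij
    have hrev : Fin.rev j ≤ Fin.rev i := by
      rcases eq_or_lt_of_le hij with h | h
      · exact h ▸ le_refl _
      · exact le_of_lt (Fin.rev_lt_rev.mpr h)
    have := strictMono_nat_gap hwmono (Fin.rev i) (Fin.rev j) hrev
    have hvi : ((Fin.rev i : Fin n) : ℕ) = n - 1 - (i : ℕ) := by rw [Fin.val_rev]; omega
    have hvj : ((Fin.rev j : Fin n) : ℕ) = n - 1 - (j : ℕ) := by rw [Fin.val_rev]; omega
    have hgi := hdge i
    have hgj := hdge j
    simp only [hldef, hd] at *
    omega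
  refine ⟨⟨l, hl⟩, ((Tuple.sort v)⁻¹).trans Fin.revPerm, ?_⟩
  funext i
  have : v i = d (Fin.rev ((Tuple.sort v)⁻¹ i)) := by
    simp only [hd, Fin.rev_rev]
    simp [hw]
  rw [this, hdl]
  rfl

lemma strictMono_le_apply {n : ℕ} {w : Fin n → ℕ} (hw : StrictMono w) (i : Fin n) :
    (i : ℕ) ≤ w i := by
  have := strictMono_nat_gap hw i ⟨0, i.pos⟩ (by simp [Fin.le_def])
  simp only [Fin.val_mk] at this
  omega

lemma phi_injective {n : ℕ} :
    Function.Injective (fun p : {l : Fin n → ℕ // ∀ i j : Fin n, i ≤ j → l j ≤ l i} × Equiv.Perm (Fin n) =>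
      (fun i => p.1.1 (p.2 i) + (n - 1 - ((p.2 i : Fin n) : ℕ)) : Fin n → ℕ)) := by
  rintro ⟨l, τ⟩ ⟨l', τ'⟩ h
  simp only at h
  set d : Fin n → ℕ := fun j => l.1 j + (n - 1 - (j : ℕ)) with hddef
  set d' : Fin n → ℕ := fun j => l'.1 j + (n - 1 - (j : ℕ)) with hd'def
  have hd : StrictAnti d := strictAnti_d l.2
  have hd' : StrictAnti d' := strictAnti_d l'.2
  have hcomp : ∀ i, d (τ i) = d' (τ' i) := fun i => congrFun h i
  set ρ : Equiv.Perm (Fin n) := τ.symm.trans τ' with hρdef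
  have hkey : ∀ j, d j = d' (ρ j) := by
    intro j
    have := hcomp (τ.symm j)
    simpa [hρdef] using this
  have hρmono : StrictMono ρ := by
    intro i j hij
    have h1 : d' (ρ j) < d' (ρ i) := by rw [← hkey, ← hkey]; exact hd hij
    exact (hd'.lt_iff_gt.mp h1)
  have hρinv : StrictMono (ρ⁻¹ : Equiv.Perm (Fin n)) := by
    intro i j hij
    have h1 : d (ρ⁻¹ j) = d' j := by rw [hkey]; simp
    have h2 : d (ρ⁻¹ i) = d' i := by rw [hkey]; simp
    have h3 : d (ρ⁻¹ j) < d (ρ⁻¹ i) := by rw [h1, h2]; exact hd' hij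
    exact hd.lt_iff_gt.mp h3
  have hρ1 : ∀ (σ : Equiv.Perm (Fin n)), StrictMono σ → ∀ i, (i : Fin n) ≤ σ i := by
    intro σ hσ i
    have hw : StrictMono (fun i : Fin n => ((σ i : Fin n) : ℕ)) := by
      intro a b hab
      exact Fin.lt_def.mp (hσ hab)
    have := strictMono_le_apply hw i
    exact Fin.le_def.mpr this
  have hρid : ρ = Equiv.refl (Fin n) := by
    ext i
    have h1 := hρ1 ρ hρmono i
    have h2 := hρ1 ρ⁻¹ hρinv (ρ i)
    have h3 : (ρ⁻¹ : Equiv.Perm (Fin n)) (ρ i) = i := by simp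
    rw [h3] at h2
    exact congrArg Fin.val (le_antisymm h2 h1)
  have hττ' : τ = τ' := by
    ext k
    have hk : ρ (τ k) = τ' k := by simp [hρdef]
    rw [hρid] at hk
    exact congrArg Fin.val (by simpa using hk)
  have hll' : l = l' := by
    apply Subtype.ext
    funext j
    have h1 : d j = d' j := by rw [hkey j, hρid]; rfl
    simp only [hddef, hd'def] at h1
    omega
  rw [hll', hττ']


/-- Cauchy–Binet-type lemma: for two sequences of functions `f_m`, `g_m` (`m ≥ 0`)
evaluated at points `x₁,…,xₙ` resp. `u₁,…,uₙ` (encoded as `f m i = f_m(xᵢ)`,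
`g m i = g_m(uᵢ)`), if all the relevant series converge, then
`Σ_λ det[f_{λⱼ+n−j}(xᵢ)] · det[g_{λⱼ+n−j}(uᵢ)] = det[h(i,j)]` where
`h(i,j) = Σ_{m≥0} f_m(xᵢ) g_m(uⱼ)`, the sum ranging over all partitions `λ` of
length at most `n`. -/
theorem cauchy_binet_infinite {R : Type*} [CommRing R] [TopologicalSpace R]
    [IsTopologicalRing R] [T2Space R] {n : ℕ} (f g : ℕ → Fin n → R)
    (hsum : ∀ i j : Fin n, Summable fun m : ℕ => f m i * g m j)
    (hsum' : ∀ p : Fin n → Fin n,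
      Summable fun l : Fin n → ℕ => ∏ i : Fin n, (f (l i) i * g (l i) (p i))) :
    ∑' l : {l : Fin n → ℕ // ∀ i j : Fin n, i ≤ j → l j ≤ l i},
        (Matrix.of fun i j : Fin n => f (l.1 j + (n - 1 - (j : ℕ))) i).det *
          (Matrix.of fun i j : Fin n => g (l.1 j + (n - 1 - (j : ℕ))) i).det =
      (Matrix.of fun i j : Fin n => ∑' m : ℕ, f m i * g m j).det := by
  classical
  have stepA : ∀ σ : Equiv.Perm (Fin n),
      HasSum (fun l : Fin n → ℕ => ∏ i, f (l i) (σ i) * g (l i) i)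
        (∏ i, ∑' m : ℕ, f m (σ i) * g m i) := by
    intro σ
    apply pi_hasSum_prod (b := fun i m => f m (σ i) * g m i)
    · intro i; exact (hsum (σ i) i).hasSum
    · have he : Summable ((fun l : Fin n → ℕ => ∏ i, f (l i) i * g (l i) (σ.symm i)) ∘
          (Equiv.arrowCongr σ (Equiv.refl ℕ))) :=
        ((Equiv.arrowCongr σ (Equiv.refl ℕ)).summable_iff).mpr (hsum' fun i => σ.symm i)
      apply he.congr
      intro l
      simp only [Function.comp, Equiv.arrowCongr_apply, Equiv.refl_apply, Function.comp_apply]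
      calc ∏ i, f (l (σ.symm i)) i * g (l (σ.symm i)) (σ.symm i)
          = ∏ i, f (l (σ.symm i)) (σ (σ.symm i)) * g (l (σ.symm i)) (σ.symm i) := by
            apply Finset.prod_congr rfl
            intro i _
            rw [Equiv.apply_symm_apply]
        _ = ∏ i, f (l i) (σ i) * g (l i) i :=
            Equiv.prod_comp σ.symm (fun k => f (l k) (σ k) * g (l k) k)
  set T : (Fin n → ℕ) → R := fun v =>
    ∑ σ : Equiv.Perm (Fin n),
      ((Equiv.Perm.sign σ : ℤ) : R) * ∏ i, f (v i) (σ i) * g (v i) i with hTdef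
  have hTsummand : ∀ σ : Equiv.Perm (Fin n),
      Summable fun v : Fin n → ℕ =>
        ((Equiv.Perm.sign σ : ℤ) : R) * ∏ i, f (v i) (σ i) * g (v i) i :=
    fun σ => (stepA σ).summable.mul_left _
  have hT : Summable T := summable_sum (fun σ _ => hTsummand σ)
  have stepB : (Matrix.of fun i j : Fin n => ∑' m : ℕ, f m i * g m j).det = ∑' v, T v := by
    rw [Matrix.det_apply']
    have h1 : ∀ σ : Equiv.Perm (Fin n),
        ((Equiv.Perm.sign σ : ℤ) : R) *
            ∏ i, (Matrix.of fun i j : Fin n => ∑' m : ℕ, f m i * g m j) (σ i) i =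
          ∑' v : Fin n → ℕ,
            ((Equiv.Perm.sign σ : ℤ) : R) * ∏ i, f (v i) (σ i) * g (v i) i := by
      intro σ
      rw [((stepA σ).mul_left _).tsum_eq]
      simp only [Matrix.of_apply]
    rw [Finset.sum_congr rfl (fun σ _ => h1 σ)]
    exact (Summable.tsum_finsetSum (fun σ _ => hTsummand σ)).symm
  have stepC : ∀ v : Fin n → ℕ,
      T v = (Matrix.of fun i j : Fin n => f (v j) i).det * ∏ i, g (v i) i := by
    intro v
    rw [Matrix.det_apply', Finset.sum_mul, hTdef]
    apply Finset.sum_congr rfl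
    intro σ _
    rw [mul_assoc]
    congr 1
    rw [← Finset.prod_mul_distrib]
    apply Finset.prod_congr rfl
    intro i _
    simp [Matrix.of_apply]
  set Φ : {l : Fin n → ℕ // ∀ i j : Fin n, i ≤ j → l j ≤ l i} × Equiv.Perm (Fin n) →
      (Fin n → ℕ) :=
    fun p => (fun i => p.1.1 (p.2 i) + (n - 1 - ((p.2 i : ℕ)))) with hΦdef
  have hzero : ∀ v, v ∉ Set.range Φ → T v = 0 := by
    intro v hv
    by_cases hinj : Function.Injective v
    · exact absurd (by
        obtain ⟨l, τ, hvd⟩ := exists_decomp v hinj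
        exact ⟨(l, τ), hvd.symm⟩) hv
    · rw [stepC v]
      have : (Matrix.of fun i j : Fin n => f (v j) i).det = 0 := by
        rw [← Matrix.det_transpose]
        simp only [Function.Injective, not_forall] at hinj
        obtain ⟨a, b, hab, hne⟩ := hinj
        apply Matrix.det_zero_of_row_eq hne
        funext i
        simp [Matrix.of_apply, hab]
      rw [this, zero_mul]
  have hTsum : HasSum T (Matrix.of fun i j : Fin n => ∑' m : ℕ, f m i * g m j).det := by
    rw [stepB]; exact hT.hasSum
  have stepE : HasSum (T ∘ Φ) (Matrix.of fun i j : Fin n => ∑' m : ℕ, f m i * g m j).det :=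
    (Function.Injective.hasSum_iff phi_injective hzero).mpr hTsum
  have stepF := hasSum_prod_fintype stepE
  have stepG : ∀ l : {l : Fin n → ℕ // ∀ i j : Fin n, i ≤ j → l j ≤ l i},
      ∑ τ : Equiv.Perm (Fin n), T (Φ (l, τ)) =
        (Matrix.of fun i j : Fin n => f (l.1 j + (n - 1 - (j : ℕ))) i).det *
          (Matrix.of fun i j : Fin n => g (l.1 j + (n - 1 - (j : ℕ))) i).det := by
    intro l
    set d : Fin n → ℕ := fun j => l.1 j + (n - 1 - (j : ℕ)) with hddef
    set M : Matrix (Fin n) (Fin n) R := Matrix.of fun i j : Fin n => f (d j) i with hMdef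
    set N : Matrix (Fin n) (Fin n) R := Matrix.of fun a b : Fin n => g (d a) b with hNdef
    have hterm : ∀ τ : Equiv.Perm (Fin n),
        T (Φ (l, τ)) = ((Equiv.Perm.sign τ : ℤ) : R) * M.det * ∏ i, g (d (τ i)) i := by
      intro τ
      rw [stepC]
      have hM : (Matrix.of fun i j : Fin n => f (Φ (l, τ) j) i) = M.submatrix id τ := by
        funext i j
        simp [hΦdef, hMdef, Matrix.submatrix_apply, hddef]
      rw [hM, Matrix.det_permute']
    calc ∑ τ : Equiv.Perm (Fin n), T (Φ (l, τ))
        = M.det * ∑ τ : Equiv.Perm (Fin n),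
            ((Equiv.Perm.sign τ : ℤ) : R) * ∏ i, N (τ i) i := by
          rw [Finset.mul_sum]
          apply Finset.sum_congr rfl
          intro τ _
          rw [hterm τ]
          ring_nf
          simp [hNdef, Matrix.of_apply]
      _ = M.det * N.det := by rw [← Matrix.det_apply']
      _ = (Matrix.of fun i j : Fin n => f (l.1 j + (n - 1 - (j : ℕ))) i).det *
            (Matrix.of fun i j : Fin n => g (l.1 j + (n - 1 - (j : ℕ))) i).det := by
          congr 1
          rw [← Matrix.det_transpose N]
          congr 1
  rw [← stepF.tsum_eq]
  apply tsum_congr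
  intro l
  simp only [Function.comp_apply]
  exact (stepG l).symm
end

section
/- det[1/((1 − x_i u_j)(1 − x_i^{−1} u_j))]_{i,j=1}^n = V(x_1 + x_1^{−1}, …, x_n + x_n^{−1}) · V(u_1, …, u_n) · ∏_{1≤i<j≤n} (1 − u_i u_j) / ∏_{i,j=1}^n ((1 − x_i u_j)(1 − x_i^{−1} u_j)), where V(a_1,…,a_n) = ∏_{i<j} (a_i − a_j) is the Vandermonde product. -/
open Finset Matrix

theorem cauchyAux {K : Type*} [Field K] : ∀ (n : ℕ) (y c d : Fin n → K),
    (∀ i j, c j + y i * d j ≠ 0) →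
    (Matrix.of fun i j : Fin n => 1 / (c j + y i * d j)).det =
      (∏ i : Fin n, ∏ j ∈ Finset.Ioi i, ((y i - y j) * (c i * d j - c j * d i))) /
        ∏ i : Fin n, ∏ j : Fin n, (c j + y i * d j) := by
  intro n
  induction n with
  | zero => intro y c d h; simp [Matrix.det_fin_zero]
  | succ n ih =>
    intro y c d h
    set A : Matrix (Fin (n+1)) (Fin (n+1)) K :=
      Matrix.of fun i j => 1 / (c j + y i * d j) with hA
    set M : Matrix (Fin (n+1)) (Fin (n+1)) K :=
      Matrix.of fun i j => if i = 0 then (1:K) else d j / (c j + y i * d j) with hM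
    set B : Matrix (Fin (n+1)) (Fin (n+1)) K :=
      Matrix.of fun i j => (1 / (c j + y 0 * d j)) *
        (Matrix.of (fun i j => (if i = 0 then (1:K) else y 0 - y i) * M i j) i j) with hB
    have hAB : A.det = B.det := by
      apply Matrix.det_eq_of_forall_row_eq_smul_add_const
        (fun i => if i = 0 then (0:K) else 1) 0 (by simp)
      intro i j
      rcases eq_or_ne i 0 with hi | hi
      · subst hi; simp [hA, hB, hM]
      · have e1 := h i j
        have e2 := h 0 j
        simp only [hA, hB, hM, Matrix.of_apply, if_neg hi, if_pos rfl, if_true]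
        field_simp [add_comm (c _), mul_comm _ (d _)] at e1 e2 ⊢
        ring
    have hBdet : B.det = (∏ j, 1 / (c j + y 0 * d j)) *
        ((∏ i, (if i = 0 then (1:K) else y 0 - y i)) * M.det) := by
      rw [hB, Matrix.det_mul_row, Matrix.det_mul_column]
    set N : Matrix (Fin (n+1)) (Fin (n+1)) K :=
      Matrix.of fun i j => if i = 0 then (if j = 0 then (1:K) else 0) else
        (if j = 0 then d 0 / (c 0 + y i * d 0) else
          (c 0 * d j - c j * d 0) / ((c j + y i * d j) * (c 0 + y i * d 0))) with hN
    have hMN : M.det = N.det := by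
      rw [← Matrix.det_transpose M, ← Matrix.det_transpose N]
      apply Matrix.det_eq_of_forall_row_eq_smul_add_const
        (fun j => if j = 0 then (0:K) else 1) 0 (by simp)
      intro j i
      simp only [Matrix.transpose_apply]
      rcases eq_or_ne j 0 with hj | hj
      · subst hj; simp [hM, hN]
      · rcases eq_or_ne i 0 with hi | hi
        · subst hi; simp [hM, hN, if_neg hj]
        · have e1 := h i j
          have e2 := h i 0
          simp only [hM, hN, Matrix.of_apply, if_neg hi, if_neg hj, if_pos rfl, if_true]
          field_simp [add_comm (c _), mul_comm _ (d _)] at e1 e2 ⊢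
          ring
    have hNP : N.det = (N.submatrix Fin.succ Fin.succ).det := by
      rw [Matrix.det_succ_row_zero]
      rw [Finset.sum_eq_single 0]
      · simp [hN, Fin.succAbove_zero]
      · intro j _ hj
        simp [hN, if_neg hj]
      · simp
    set C' : Matrix (Fin n) (Fin n) K :=
      Matrix.of fun i j => 1 / (c j.succ + y i.succ * d j.succ) with hC'
    have hP : (N.submatrix Fin.succ Fin.succ).det =
        (∏ j : Fin n, (c 0 * d j.succ - c j.succ * d 0)) *
          ((∏ i : Fin n, 1 / (c 0 + y i.succ * d 0)) * C'.det) := by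
      have : N.submatrix Fin.succ Fin.succ =
          Matrix.of fun i j : Fin n => (c 0 * d j.succ - c j.succ * d 0) *
            (Matrix.of (fun i j : Fin n => (1 / (c 0 + y i.succ * d 0)) * C' i j) i j) := by
        ext i j
        simp only [Matrix.submatrix_apply, hN, hC', Matrix.of_apply,
          if_neg (Fin.succ_ne_zero i), if_neg (Fin.succ_ne_zero j)]
        field_simp
      rw [this, Matrix.det_mul_row, Matrix.det_mul_column]
    have hC'det := ih (fun i => y i.succ) (fun j => c j.succ) (fun j => d j.succ)
      (fun i j => h i.succ j.succ)
    rw [hAB, hBdet, hMN, hNP, hP, hC'det]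
    -- now a scalar identity
    have h0 : ∀ j, c j + y 0 * d j ≠ 0 := fun j => h 0 j
    have hsD : (∏ i : Fin n, ∏ j : Fin n, (c j.succ + y i.succ * d j.succ)) ≠ 0 :=
      Finset.prod_ne_zero_iff.mpr fun i _ =>
        Finset.prod_ne_zero_iff.mpr fun j _ => h i.succ j.succ
    have hr0 : (∏ i : Fin (n+1), (if i = 0 then (1:K) else y 0 - y i))
        = ∏ i : Fin n, (y 0 - y i.succ) := by
      rw [Fin.prod_univ_succ]; simp [Fin.succ_ne_zero]
    have hg : (∏ j : Fin (n+1), 1 / (c j + y 0 * d j))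
        = 1 / ∏ j : Fin (n+1), (c j + y 0 * d j) := by
      simp only [one_div, Finset.prod_inv_distrib]
    have hrf : (∏ i : Fin n, 1 / (c 0 + y i.succ * d 0))
        = 1 / ∏ i : Fin n, (c 0 + y i.succ * d 0) := by
      simp only [one_div, Finset.prod_inv_distrib]
    have hVsplit : (∏ i : Fin (n+1), ∏ j ∈ Finset.Ioi i, ((y i - y j) * (c i * d j - c j * d i)))
        = (∏ j : Fin n, ((y 0 - y j.succ) * (c 0 * d j.succ - c j.succ * d 0))) *
          ∏ i : Fin n, ∏ j ∈ Finset.Ioi i, ((y i.succ - y j.succ) *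
            (c i.succ * d j.succ - c j.succ * d i.succ)) := by
      rw [Fin.prod_univ_succ, Fin.prod_Ioi_zero]
      congr 1
      exact Finset.prod_congr rfl fun i _ => Fin.prod_Ioi_succ _ i
    have hDsplit : (∏ i : Fin (n+1), ∏ j : Fin (n+1), (c j + y i * d j))
        = (∏ j : Fin (n+1), (c j + y 0 * d j)) *
          ((∏ i : Fin n, (c 0 + y i.succ * d 0)) *
            ∏ i : Fin n, ∏ j : Fin n, (c j.succ + y i.succ * d j.succ)) := by
      rw [Fin.prod_univ_succ]
      congr 1
      rw [← Finset.prod_mul_distrib]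
      exact Finset.prod_congr rfl fun i _ => by rw [Fin.prod_univ_succ]
    rw [hr0, hg, hrf, hVsplit, hDsplit]
    have hD0 : (∏ j : Fin (n+1), (c j + y 0 * d j)) ≠ 0 :=
      Finset.prod_ne_zero_iff.mpr fun j _ => h0 j
    have hD1 : (∏ i : Fin n, (c 0 + y i.succ * d 0)) ≠ 0 :=
      Finset.prod_ne_zero_iff.mpr fun i _ => h i.succ 0
    field_simp
    rw [Finset.prod_mul_distrib]
    simp only [mul_comm (d 0) (c _)]
    ring


/-- The Vandermonde product `V(a₁,…,aₙ) = ∏_{i<j} (a i - a j)`. -/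
def vandermondeProd {K : Type*} [CommRing K] {n : ℕ} (a : Fin n → K) : K :=
  ∏ i : Fin n, ∏ j ∈ Finset.Ioi i, (a i - a j)

/-- `det[1/((1 − xᵢuⱼ)(1 − xᵢ⁻¹uⱼ))] = V(x+x⁻¹) · V(u) · ∏_{i<j}(1 − uᵢuⱼ) /
∏_{i,j} ((1 − xᵢuⱼ)(1 − xᵢ⁻¹uⱼ))`. -/
theorem det_inv_one_sub_mul {K : Type*} [Field K] {n : ℕ} (x u : Fin n → K)
    (hx : ∀ i, x i ≠ 0)
    (h1 : ∀ i j, 1 - x i * u j ≠ 0) (h2 : ∀ i j, 1 - (x i)⁻¹ * u j ≠ 0) :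
    (Matrix.of fun i j : Fin n => 1 / ((1 - x i * u j) * (1 - (x i)⁻¹ * u j))).det =
      vandermondeProd (fun i => x i + (x i)⁻¹) * vandermondeProd u *
        (∏ i : Fin n, ∏ j ∈ Finset.Ioi i, (1 - u i * u j)) /
        ∏ i : Fin n, ∏ j : Fin n, ((1 - x i * u j) * (1 - (x i)⁻¹ * u j)) := by
  have hE : ∀ i j, (1 - x i * u j) * (1 - (x i)⁻¹ * u j)
      = (1 + u j * u j) + (x i + (x i)⁻¹) * (-(u j)) := by
    intro i j
    have := hx i
    field_simp
    ring
  have hne : ∀ i j, (1 + u j * u j) + (x i + (x i)⁻¹) * (-(u j)) ≠ 0 := fun i j => by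
    rw [← hE]; exact mul_ne_zero (h1 i j) (h2 i j)
  have key := cauchyAux n (fun i => x i + (x i)⁻¹) (fun j => 1 + u j * u j)
    (fun j => -(u j)) hne
  have hM : (Matrix.of fun i j : Fin n => 1 / ((1 - x i * u j) * (1 - (x i)⁻¹ * u j)))
      = Matrix.of fun i j : Fin n => 1 / ((1 + u j * u j) + (x i + (x i)⁻¹) * (-(u j))) := by
    ext i j
    rw [Matrix.of_apply, Matrix.of_apply, hE]
  rw [hM, key]
  unfold vandermondeProd
  congr 1
  · have hcd : ∀ i j : Fin n,
        ((x i + (x i)⁻¹) - (x j + (x j)⁻¹)) *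
          ((1 + u i * u i) * (-(u j)) - (1 + u j * u j) * (-(u i)))
        = ((x i + (x i)⁻¹) - (x j + (x j)⁻¹)) * ((u i - u j) * (1 - u i * u j)) := by
      intro i j; ring
    calc (∏ i : Fin n, ∏ j ∈ Finset.Ioi i, ((x i + (x i)⁻¹ - (x j + (x j)⁻¹)) *
            ((1 + u i * u i) * (-(u j)) - (1 + u j * u j) * (-(u i)))))
        = ∏ i : Fin n, ∏ j ∈ Finset.Ioi i, ((x i + (x i)⁻¹ - (x j + (x j)⁻¹)) *
            ((u i - u j) * (1 - u i * u j))) := by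
          exact Finset.prod_congr rfl fun i _ => Finset.prod_congr rfl fun j _ => hcd i j
      _ = _ := by
          simp only [Finset.prod_mul_distrib]
          ring
  · exact Finset.prod_congr rfl fun i _ => Finset.prod_congr rfl fun j _ => (hE i j).symm
end

section
/- (−1)^{n(n−1)/2} (u_1 ⋯ u_n)^{n−1} · V(u_1 + u_1^{−1}, …, u_n + u_n^{−1}) = V(u_1, …, u_n) · ∏_{1≤i<j≤n} (1 − u_i u_j). -/
lemma aux_card_sum (n : ℕ) : ∑ i : Fin n, (Finset.Ioi i).card = n * (n - 1) / 2 := by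
  simp only [Fin.card_Ioi]
  rw [Fin.sum_univ_eq_sum_range (fun i => n - 1 - i)]
  rw [Finset.sum_range_reflect (fun i => i) n, Finset.sum_range_id]

lemma aux_prod_mul {M : Type*} [CommMonoid M] {n : ℕ} (v : Fin n → M) :
    ∏ i : Fin n, ∏ j ∈ Finset.Ioi i, (v i * v j) = (∏ i : Fin n, v i) ^ (n - 1) := by
  simp only [Finset.prod_mul_distrib]
  have h2 : ∏ i : Fin n, ∏ j ∈ Finset.Ioi i, v j
      = ∏ j : Fin n, ∏ i ∈ Finset.Iio j, v j := by
    rw [Finset.prod_comm' (t' := Finset.univ) (s' := fun j => Finset.Iio j)]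
    intro i j
    simp [Finset.mem_Ioi, Finset.mem_Iio]
  rw [h2]
  simp only [Finset.prod_const, Fin.card_Ioi, Fin.card_Iio, ← Finset.prod_pow_eq_pow_sum,
    ← Finset.prod_mul_distrib, ← pow_add]
  rw [← Finset.prod_pow]
  refine Finset.prod_congr rfl fun i _ => ?_
  congr 1
  omega

/-- `(−1)^{n(n−1)/2} (u₁⋯uₙ)^{n−1} · V(u₁+u₁⁻¹,…,uₙ+uₙ⁻¹)
      = V(u₁,…,uₙ) · ∏_{i<j} (1 − uᵢuⱼ)`. -/
theorem neg_one_pow_mul_vandermonde_sum_inv {K : Type*} [Field K] {n : ℕ}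
    (u : Fin n → K) (hu : ∀ i, u i ≠ 0) :
    (-1 : K) ^ (n * (n - 1) / 2) * (∏ i : Fin n, u i) ^ (n - 1) *
        vandermondeProd (fun i => u i + (u i)⁻¹) =
      vandermondeProd u * ∏ i : Fin n, ∏ j ∈ Finset.Ioi i, (1 - u i * u j) := by
  have hpair : ∀ i j : Fin n,
      (u i + (u i)⁻¹) - (u j + (u j)⁻¹)
        = (u i - u j) * (1 - u i * u j) * (-1 * ((u i)⁻¹ * (u j)⁻¹)) := by
    intro i j
    have := hu i; have := hu j
    rw [inv_eq_one_div (u i), inv_eq_one_div (u j)]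
    field_simp
    ring
  unfold vandermondeProd
  have h1 : (∏ i : Fin n, ∏ j ∈ Finset.Ioi i,
        ((u i + (u i)⁻¹) - (u j + (u j)⁻¹)))
      = (∏ i : Fin n, ∏ j ∈ Finset.Ioi i, (u i - u j)) *
        (∏ i : Fin n, ∏ j ∈ Finset.Ioi i, (1 - u i * u j)) *
        ((∏ i : Fin n, ∏ j ∈ Finset.Ioi i, (-1 : K)) *
         (∏ i : Fin n, ∏ j ∈ Finset.Ioi i, ((u i)⁻¹ * (u j)⁻¹))) := by
    simp only [← Finset.prod_mul_distrib]
    exact Finset.prod_congr rfl fun i _ => Finset.prod_congr rfl fun j _ => hpair i j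
  have hsign : (∏ i : Fin n, ∏ j ∈ Finset.Ioi i, (-1 : K))
      = (-1 : K) ^ (n * (n - 1) / 2) := by
    simp only [Finset.prod_const]
    rw [Finset.prod_pow_eq_pow_sum, aux_card_sum]
  have hinv : (∏ i : Fin n, ∏ j ∈ Finset.Ioi i, ((u i)⁻¹ * (u j)⁻¹))
      = ((∏ i : Fin n, u i) ^ (n - 1))⁻¹ := by
    rw [aux_prod_mul (fun i => (u i)⁻¹)]
    rw [Finset.prod_inv_distrib, inv_pow]
  rw [h1, hsign, hinv]
  have hP : (∏ i : Fin n, u i) ^ (n - 1) ≠ 0 :=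
    pow_ne_zero _ (Finset.prod_ne_zero_iff.mpr fun i _ => hu i)
  have hs : (-1 : K) ^ (n * (n - 1) / 2) * (-1 : K) ^ (n * (n - 1) / 2) = 1 := by
    rw [← pow_add]
    exact Even.neg_one_pow ⟨_, rfl⟩
  field_simp
  ring_nf
  rw [pow_mul, show ((-1 : K) ^ (n * (n - 1) / 2)) ^ 2 = 1 by rw [sq]; exact hs, mul_one]
end

section
/- det[u_i^{n−j} + u_i^{n+j−2}]_{i,j=1}^n = 2 · V(u_1,…,u_n) · ∏_{1≤i<j≤n} (1 − u_i u_j). -/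
open Polynomial Finset

private theorem dickson_aux {F : Type*} [CommRing F] [Nontrivial F] :
    ∀ m : ℕ, Monic (dickson 1 (1 : F) (m + 1)) ∧ (dickson 1 (1 : F) (m + 1)).natDegree = m + 1
  | 0 => by simp [dickson_one, monic_X]
  | 1 => by
    have h : dickson 1 (1 : F) 2 = X ^ 2 - C 2 := by
      rw [dickson_two, map_ofNat, map_one]
      ring
    rw [h]
    exact ⟨monic_X_pow_sub_C _ (by norm_num), by simp [natDegree_X_pow_sub_C]⟩
  | (m + 2) => by
    obtain ⟨h1, d1⟩ := dickson_aux (F := F) (m + 1)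
    obtain ⟨h0, d0⟩ := dickson_aux (F := F) m
    have key : dickson 1 (1 : F) (m + 2 + 1)
        = X * dickson 1 1 (m + 2) - dickson 1 1 (m + 1) := by
      have := dickson_add_two 1 (1 : F) (m + 1)
      simpa using this
    have hm : Monic (X * dickson 1 (1 : F) (m + 2)) := monic_X.mul h1
    have hdm : (X * dickson 1 (1 : F) (m + 2)).natDegree = m + 3 := by
      rw [monic_X.natDegree_mul h1, natDegree_X, d1]
      omega
    have hlt : (dickson 1 (1 : F) (m + 1)).natDegree
        < (X * dickson 1 (1 : F) (m + 2)).natDegree := by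
      rw [hdm, d0]; omega
    have hdeg : (dickson 1 (1 : F) (m + 1)).degree
        < (X * dickson 1 (1 : F) (m + 2)).degree := degree_lt_degree hlt
    constructor
    · rw [key, sub_eq_add_neg]
      exact hm.add_of_left (by rwa [degree_neg])
    · rw [key, natDegree_sub_eq_left_of_natDegree_lt hlt, hdm]

private theorem prod_pair_aux {M : Type*} [CommMonoid M] {n : ℕ} (f : Fin n → M) :
    ∏ i : Fin n, ∏ j ∈ Ioi i, (f i * f j) = ∏ i : Fin n, f i ^ (n - 1) := by
  have h2 : (∏ i : Fin n, ∏ j ∈ Ioi i, f j) = ∏ j : Fin n, f j ^ (j : ℕ) := by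
    rw [Finset.prod_comm' (t' := univ) (s' := fun y => Iio y)
      (by intro x y; simp [Finset.mem_Ioi, Finset.mem_Iio])]
    simp [Finset.prod_const, Fin.card_Iio]
  calc ∏ i : Fin n, ∏ j ∈ Ioi i, (f i * f j)
      = (∏ i : Fin n, ∏ j ∈ Ioi i, f i) * ∏ i : Fin n, ∏ j ∈ Ioi i, f j := by
        simp [Finset.prod_mul_distrib]
    _ = (∏ i : Fin n, f i ^ (n - 1 - (i : ℕ))) * ∏ i : Fin n, f i ^ (i : ℕ) := by
        rw [h2]; simp [Finset.prod_const, Fin.card_Ioi]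
    _ = ∏ i : Fin n, f i ^ (n - 1) := by
        rw [← Finset.prod_mul_distrib]
        refine Finset.prod_congr rfl fun i _ => ?_
        rw [← pow_add]
        congr 1
        have := i.isLt
        omega

private theorem key_det {F : Type*} [Field F] {n : ℕ} (hn : 0 < n) (x : Fin n → F)
    (hx : ∀ i, x i ≠ 0) :
    (Matrix.of fun i j : Fin n => x i ^ (n - 1 - (j : ℕ)) + x i ^ (n - 1 + (j : ℕ))).det =
      2 * (∏ i : Fin n, ∏ j ∈ Ioi i, (x i - x j)) *
        ∏ i : Fin n, ∏ j ∈ Ioi i, (1 - x i * x j) := by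
  haveI : NeZero n := ⟨hn.ne'⟩
  set z : Fin n → F := fun i => x i + (x i)⁻¹ with hz
  set p : Fin n → F[X] := fun j => if (j : ℕ) = 0 then 1 else dickson 1 1 (j : ℕ) with hp
  set c : Fin n → F := fun j => if (j : ℕ) = 0 then 2 else 1 with hc
  have entry : ∀ i j : Fin n, x i ^ (n - 1 - (j : ℕ)) + x i ^ (n - 1 + (j : ℕ))
      = c j * (x i ^ (n - 1) * (p j).eval (z i)) := by
    intro i j
    rcases Nat.eq_zero_or_pos (j : ℕ) with h | h
    · simp [hp, hc, Fin.val_eq_zero_iff.mp h, two_mul]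
    · have hne : (j : ℕ) ≠ 0 := h.ne'
      have hjle : (j : ℕ) ≤ n - 1 := by have := j.isLt; omega
      simp only [hp, hc, if_neg hne, one_mul, hz]
      rw [dickson_one_one_eval_add_inv (x i) (x i)⁻¹ (mul_inv_cancel₀ (hx i)) (j : ℕ)]
      rw [mul_add, ← pow_add, inv_pow, ← pow_sub₀ (x i) (hx i) hjle, add_comm]
  have hdeg : ∀ j : Fin n, (p j).natDegree = (j : ℕ) := by
    intro j
    rcases Nat.eq_zero_or_pos (j : ℕ) with h | h
    · simp [hp, Fin.val_eq_zero_iff.mp h]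
    · obtain ⟨m, hm⟩ : ∃ m, (j : ℕ) = m + 1 := ⟨(j : ℕ) - 1, by omega⟩
      simp only [hp, if_neg h.ne', hm]
      exact (dickson_aux m).2
  have hmonic : ∀ j : Fin n, Monic (p j) := by
    intro j
    rcases Nat.eq_zero_or_pos (j : ℕ) with h | h
    · simp [hp, Fin.val_eq_zero_iff.mp h, monic_one]
    · obtain ⟨m, hm⟩ : ∃ m, (j : ℕ) = m + 1 := ⟨(j : ℕ) - 1, by omega⟩
      simp only [hp, if_neg h.ne', hm]
      exact (dickson_aux m).1
  have hcprod : (∏ j : Fin n, c j) = 2 := by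
    have : ∀ j : Fin n, c j = if j = (0 : Fin n) then 2 else 1 := by
      intro j
      simp only [hc, Fin.val_eq_zero_iff]
    simp [this]
  have hzdiff : ∀ i j : Fin n, z j - z i
      = ((x i)⁻¹ * (x j)⁻¹) * ((x i - x j) * (1 - x i * x j)) := by
    intro i j
    simp only [hz]
    field_simp [hx i, hx j]
    ring
  calc (Matrix.of fun i j : Fin n => x i ^ (n - 1 - (j : ℕ)) + x i ^ (n - 1 + (j : ℕ))).det
      = (Matrix.of fun i j : Fin n =>
          c j * ((Matrix.of fun i j : Fin n => x i ^ (n - 1) * (p j).eval (z i)) i j)).det := by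
        congr 1
        ext i j
        simpa using entry i j
    _ = (∏ j, c j) * (Matrix.of fun i j : Fin n =>
          x i ^ (n - 1) * ((Matrix.of fun i j : Fin n => (p j).eval (z i)) i j)).det := by
        rw [Matrix.det_mul_row]
        simp only [Matrix.of_apply]
    _ = 2 * ((∏ i, x i ^ (n - 1)) * (Matrix.of fun i j : Fin n => (p j).eval (z i)).det) := by
        rw [Matrix.det_mul_column, hcprod]
    _ = 2 * ((∏ i, x i ^ (n - 1)) * (Matrix.vandermonde z).det) := by
        rw [Matrix.det_eval_matrixOfPolynomials_eq_det_vandermonde z p hdeg hmonic]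
    _ = 2 * ((∏ i, x i ^ (n - 1)) *
          ((∏ i : Fin n, ∏ j ∈ Ioi i, ((x i)⁻¹ * (x j)⁻¹)) *
            ∏ i : Fin n, ∏ j ∈ Ioi i, ((x i - x j) * (1 - x i * x j)))) := by
        rw [Matrix.det_vandermonde]
        congr 1
        congr 1
        rw [← Finset.prod_mul_distrib]
        refine Finset.prod_congr rfl fun i _ => ?_
        rw [← Finset.prod_mul_distrib]
        exact Finset.prod_congr rfl fun j _ => hzdiff i j
    _ = 2 * (∏ i : Fin n, ∏ j ∈ Ioi i, (x i - x j)) *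
          ∏ i : Fin n, ∏ j ∈ Ioi i, (1 - x i * x j) := by
        rw [prod_pair_aux (fun i => (x i)⁻¹)]
        have hone : (∏ i, x i ^ (n - 1)) * (∏ i : Fin n, (x i)⁻¹ ^ (n - 1)) = 1 := by
          rw [← Finset.prod_mul_distrib]
          refine Finset.prod_eq_one fun i _ => ?_
          rw [← mul_pow, mul_inv_cancel₀ (hx i), one_pow]
        have hsplit : (∏ i : Fin n, ∏ j ∈ Ioi i, ((x i - x j) * (1 - x i * x j)))
            = (∏ i : Fin n, ∏ j ∈ Ioi i, (x i - x j)) *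
              ∏ i : Fin n, ∏ j ∈ Ioi i, (1 - x i * x j) := by
          simp [Finset.prod_mul_distrib]
        rw [hsplit, show ∀ a b c d : F, 2 * (a * (b * (c * d))) = ((a * b) * (2 * (c * d)))
          from fun a b c d => by ring, hone, one_mul]
        ring

private theorem map_lhs {A B : Type*} [CommRing A] [CommRing B] (g : A →+* B) {n : ℕ}
    (v : Fin n → A) :
    g ((Matrix.of fun i j : Fin n => v i ^ (n - 1 - (j : ℕ)) + v i ^ (n - 1 + (j : ℕ))).det)
      = (Matrix.of fun i j : Fin n =>
          g (v i) ^ (n - 1 - (j : ℕ)) + g (v i) ^ (n - 1 + (j : ℕ))).det := by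
  rw [RingHom.map_det]
  congr 1
  ext i j
  simp [Matrix.map_apply]

private theorem map_rhs {A B : Type*} [CommRing A] [CommRing B] (g : A →+* B) {n : ℕ}
    (v : Fin n → A) :
    g (2 * (∏ i : Fin n, ∏ j ∈ Ioi i, (v i - v j)) *
        ∏ i : Fin n, ∏ j ∈ Ioi i, (1 - v i * v j))
      = 2 * (∏ i : Fin n, ∏ j ∈ Ioi i, (g (v i) - g (v j))) *
          ∏ i : Fin n, ∏ j ∈ Ioi i, (1 - g (v i) * g (v j)) := by
  simp [map_ofNat]

private theorem generic_det {n : ℕ} (hn : 0 < n) :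
    (Matrix.of fun i j : Fin n =>
        (MvPolynomial.X i : MvPolynomial (Fin n) ℤ) ^ (n - 1 - (j : ℕ)) +
          (MvPolynomial.X i) ^ (n - 1 + (j : ℕ))).det =
      2 * (∏ i : Fin n, ∏ j ∈ Ioi i,
            ((MvPolynomial.X i : MvPolynomial (Fin n) ℤ) - MvPolynomial.X j)) *
        ∏ i : Fin n, ∏ j ∈ Ioi i, (1 - MvPolynomial.X i * MvPolynomial.X j) := by
  apply IsFractionRing.injective (MvPolynomial (Fin n) ℤ)
    (FractionRing (MvPolynomial (Fin n) ℤ))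
  rw [map_lhs, map_rhs]
  refine key_det hn _ fun i => ?_
  exact (map_ne_zero_iff _ (IsFractionRing.injective _ _)).mpr (MvPolynomial.X_ne_zero i)

/-- `det[uᵢ^{n−j} + uᵢ^{n+j−2}]_{i,j=1}^n = 2 · V(u₁,…,uₙ) · ∏_{i<j} (1 − uᵢuⱼ)`
(rows `i = 1,…,n`, columns `j = 1,…,n`; here zero-indexed, so the exponents are
`n − 1 − j` and `n − 1 + j` for `j = 0,…,n−1`). -/
theorem det_pow_add_pow {K : Type*} [CommRing K] {n : ℕ} (hn : 0 < n) (u : Fin n → K) :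
    (Matrix.of fun i j : Fin n => u i ^ (n - 1 - (j : ℕ)) + u i ^ (n - 1 + (j : ℕ))).det =
      2 * vandermondeProd u * ∏ i : Fin n, ∏ j ∈ Finset.Ioi i, (1 - u i * u j) := by
  rw [vandermondeProd]
  have h := congrArg (MvPolynomial.aeval (R := ℤ) u).toRingHom (generic_det hn)
  rw [map_lhs, map_rhs] at h
  simpa using h
end

section
/- Let A be an (N+1)×(N+1) lower unitriangular matrix with inverse B, where N + 1 = n + m, and extend A, B by zero outside indices 0..N. Define A⁺ by A⁺_{ij} = A_{ij} + A_{i, 2(n−1)−j} for j < n−1 and A⁺_{ij} = A_{ij} for j ≥ n−1, and define B⁻ by B⁻_{ij} = B_{ij} − B_{2(n−1)−i, j} for i > n−1 and B⁻_{ij} = B_{ij} for i ≤ n−1. Then A⁺ B⁻ is the identity matrix. -/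
/-- Extension of a matrix indexed by `Fin N` to all integer indices, by zero. -/
def extByZero {N : ℕ} {R : Type*} [CommRing R] (A : Matrix (Fin N) (Fin N) R) :
    ℤ → ℤ → R := fun i j =>
  if h : 0 ≤ i ∧ i < (N : ℤ) ∧ 0 ≤ j ∧ j < (N : ℤ) then
    A ⟨i.toNat, by omega⟩ ⟨j.toNat, by omega⟩ else 0

lemma extByZero_coe {N : ℕ} {R : Type*} [CommRing R] (A : Matrix (Fin N) (Fin N) R)
    (i j : Fin N) : extByZero A (i : ℤ) (j : ℤ) = A i j := by
  have hi := i.isLt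
  have hj := j.isLt
  rw [extByZero, dif_pos (by omega)]
  congr 1

lemma extByZero_zero {N : ℕ} {R : Type*} [CommRing R] (A : Matrix (Fin N) (Fin N) R)
    (i j : ℤ) (h : ¬(0 ≤ i ∧ i < (N : ℤ) ∧ 0 ≤ j ∧ j < (N : ℤ))) :
    extByZero A i j = 0 := by
  rw [extByZero, dif_neg h]

lemma sum_fin_eq_sum_Icc {N : ℕ} {R : Type*} [CommRing R] (f : ℤ → R) :
    ∑ j : Fin N, f (j : ℤ) = ∑ j ∈ Finset.Icc (0 : ℤ) ((N : ℤ) - 1), f j := by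
  refine Finset.sum_bij' (i := fun (j : Fin N) _ => (j : ℤ))
    (j := fun z hz => (⟨z.toNat, by simp [Finset.mem_Icc] at hz; omega⟩ : Fin N))
    ?_ ?_ ?_ ?_ ?_
  · intro a _; have := a.isLt; simp [Finset.mem_Icc]
  · intro a ha; simp
  · intro a ha; ext; simp
  · intro a ha; simp [Finset.mem_Icc] at ha; simp; omega
  · intro a _; rfl

/-- Let `A` be a lower unitriangular `(N+1)×(N+1)` matrix with inverse `B`, where
`N + 1 = n + m`, both extended by zero outside the index range. Define
`A⁺_{ij} = A_{ij} + A_{i,2(n−1)−j}` for `j < n−1` and `A⁺_{ij} = A_{ij}` otherwise, and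
`B⁻_{ij} = B_{ij} − B_{2(n−1)−i,j}` for `i > n−1` and `B⁻_{ij} = B_{ij}` otherwise.
Then `A⁺ B⁻ = 1`. -/
theorem Aplus_mul_Bminus {R : Type*} [CommRing R] (n m : ℕ)
    (A B : Matrix (Fin (n + m)) (Fin (n + m)) R)
    (hA_tri : ∀ i j : Fin (n + m), (i : ℕ) < (j : ℕ) → A i j = 0)
    (hA_diag : ∀ i : Fin (n + m), A i i = 1)
    (hAB : A * B = 1) (hBA : B * A = 1) :
    (Matrix.of fun i j : Fin (n + m) =>
        if (j : ℤ) < (n : ℤ) - 1 then A i j + extByZero A (i : ℤ) (2 * ((n : ℤ) - 1) - (j : ℤ))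
        else A i j) *
      (Matrix.of fun i j : Fin (n + m) =>
        if (n : ℤ) - 1 < (i : ℤ) then B i j - extByZero B (2 * ((n : ℤ) - 1) - (i : ℤ)) (j : ℤ)
        else B i j) = 1 := by
  rcases Nat.eq_zero_or_pos n with hn | hn
  · subst hn
    have h1 : (Matrix.of fun i j : Fin (0 + m) =>
        if (j : ℤ) < (0 : ℕ) - 1 then A i j + extByZero A (i : ℤ) (2 * (((0:ℕ) : ℤ) - 1) - (j : ℤ))
        else A i j) = A := by
      ext i j
      simp only [Matrix.of_apply]
      rw [if_neg (by push_cast; omega)]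
    have h2 : (Matrix.of fun i j : Fin (0 + m) =>
        if ((0:ℕ) : ℤ) - 1 < (i : ℤ) then B i j - extByZero B (2 * (((0:ℕ) : ℤ) - 1) - (i : ℤ)) (j : ℤ)
        else B i j) = B := by
      ext i j
      simp only [Matrix.of_apply]
      rw [if_pos (by push_cast; omega), extByZero_zero _ _ _ (by push_cast; omega), sub_zero]
    rw [h1, h2, hAB]
  · -- main case : n ≥ 1
    set c : ℤ := (n : ℤ) - 1 with hc
    have hc0 : 0 ≤ c := by omega
    have hcN : c < (n : ℤ) + m := by omega
    ext i k
    rw [Matrix.mul_apply]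
    set H : ℤ → R := fun j =>
      if j < c then extByZero A (i : ℤ) (2 * c - j) * extByZero B j (k : ℤ) else 0 with hH
    set K : ℤ → R := fun j =>
      if c < j then extByZero A (i : ℤ) j * extByZero B (2 * c - j) (k : ℤ) else 0 with hK
    have key : ∀ j : Fin (n + m),
        (Matrix.of fun i j : Fin (n + m) =>
          if (j : ℤ) < (n : ℤ) - 1 then A i j + extByZero A (i : ℤ) (2 * ((n : ℤ) - 1) - (j : ℤ))
          else A i j) i j *
        (Matrix.of fun i j : Fin (n + m) =>
          if (n : ℤ) - 1 < (i : ℤ) then B i j - extByZero B (2 * ((n : ℤ) - 1) - (i : ℤ)) (j : ℤ)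
          else B i j) j k
        = A i j * B j k + H (j : ℤ) - K (j : ℤ) := by
      intro j
      simp only [Matrix.of_apply, hH, hK, ← hc]
      rcases lt_trichotomy ((j : ℤ)) c with h | h | h
      · rw [if_pos h, if_neg (by omega), if_pos h, if_neg (by omega), extByZero_coe]
        ring
      · rw [if_neg (by omega), if_neg (by omega), if_neg (by omega), if_neg (by omega)]
        ring
      · rw [if_neg (by omega), if_pos h, if_neg (by omega), if_pos h, extByZero_coe]
        ring
    rw [Finset.sum_congr rfl (fun j _ => key j)]
    rw [Finset.sum_sub_distrib, Finset.sum_add_distrib, ← Matrix.mul_apply, hAB]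
    have hsums : ∑ j : Fin (n + m), H (j : ℤ) = ∑ j : Fin (n + m), K (j : ℤ) := by
      rw [sum_fin_eq_sum_Icc, sum_fin_eq_sum_Icc]
      push_cast
      have hKH : ∀ j : ℤ, K j = H (2 * c - j) := by
        intro j
        simp only [hH, hK]
        rw [show 2 * c - (2 * c - j) = j by ring]
        exact if_congr (by omega) rfl rfl
      symm
      calc ∑ j ∈ Finset.Icc (0 : ℤ) (((n : ℕ) + m : ℤ) - 1), K j
          = ∑ j ∈ Finset.Icc (0 : ℤ) (((n : ℕ) + m : ℤ) - 1), H (2 * c - j) := by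
            exact Finset.sum_congr rfl fun j _ => hKH j
        _ = ∑ j ∈ Finset.Icc (2 * c - (((n : ℕ) + m : ℤ) - 1)) (2 * c), H j := by
            apply Finset.sum_nbij' (i := fun j => 2 * c - j) (j := fun j => 2 * c - j)
            · intro a ha; simp [Finset.mem_Icc] at *; omega
            · intro a ha; simp [Finset.mem_Icc] at *; omega
            · intro a _; ring
            · intro a _; ring
            · intro a _; rfl
        _ = ∑ j ∈ Finset.Icc (0 : ℤ) (((n : ℕ) + m : ℤ) - 1), H j := by
            set T : Finset ℤ :=
              Finset.Icc (max 0 (2 * c - (((n : ℕ) + m : ℤ) - 1))) (min (((n : ℕ) + m : ℤ) - 1) (2 * c)) with hT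
            have hH0 : ∀ j : ℤ, j ∉ T → H j = 0 := by
              intro j hj
              simp only [hT, Finset.mem_Icc, not_and_or, not_le] at hj
              simp only [hH]
              by_cases hjc : j < c
              · rw [if_pos hjc]
                by_cases h1 : 0 ≤ j ∧ j < ((n : ℕ) + m : ℤ)
                · by_cases h2 : 0 ≤ 2 * c - j ∧ 2 * c - j < ((n : ℕ) + m : ℤ)
                  · exfalso; push_cast at h1 h2 hj ⊢; omega
                  · rw [show extByZero A ((i : Fin (n+m)) : ℤ) (2 * c - j) = 0 from
                      extByZero_zero _ _ _ (by push_cast at h2 ⊢; omega), zero_mul]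
                · rw [show extByZero B j ((k : Fin (n+m)) : ℤ) = 0 from
                    extByZero_zero _ _ _ (by push_cast at h1 ⊢; omega), mul_zero]
              · rw [if_neg hjc]
            rw [← Finset.sum_subset (show T ⊆ Finset.Icc (2 * c - (((n : ℕ) + m : ℤ) - 1)) (2 * c) by
                  intro x hx; simp [hT, Finset.mem_Icc] at *; omega)
                (fun x _ hx => hH0 x hx),
              ← Finset.sum_subset (show T ⊆ Finset.Icc (0 : ℤ) (((n : ℕ) + m : ℤ) - 1) by
                  intro x hx; simp [hT, Finset.mem_Icc] at *; omega)
                (fun x _ hx => hH0 x hx)]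
    rw [hsums]
    ring
end

section
/- The sequence dual to the factorial powers f_k(x) = (x−c_0)⋯(x−c_{k−1}) is ĝ_k(u) = u^k / ∏_{l=0}^k (1 − u c_l); that is, Σ_{k=0}^∞ (x−c_0)⋯(x−c_{k−1}) · u^k / ((1−u c_0)⋯(1−u c_k)) = 1/(1 − x u) as a formal power series identity in u over the polynomial ring in x and the c_l. -/
/-- The topology of coefficientwise (discrete) convergence on formal power series. -/
noncomputable instance powerSeriesTopology (K : Type*) : TopologicalSpace (PowerSeries K) :=
  letI : TopologicalSpace K := ⊥
  (by unfold PowerSeries MvPowerSeries; exact Pi.topologicalSpace)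

open PowerSeries Finset Filter

lemma hasSum_powerSeries {K : Type*} [Field K] (f : ℕ → PowerSeries K) (g : PowerSeries K)
    (h : ∀ n, (coeff n) g = ∑ k ∈ range (n + 1), coeff n (f k))
    (hf : ∀ k n, n < k → coeff n (f k) = 0) : HasSum f g := by
  letI : TopologicalSpace K := ⊥
  haveI : DiscreteTopology K := ⟨rfl⟩
  rw [HasSum]
  refine tendsto_pi_nhds.2 fun d => ?_
  refine tendsto_nhds_of_eventually_eq ?_
  refine eventually_atTop.2 ⟨range (d () + 1), fun s hs => ?_⟩
  have key : ∀ φ : PowerSeries K, φ d = coeff (d ()) φ := by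
    intro φ
    have hd : d = Finsupp.single () (d ()) := Finsupp.unique_single d
    conv_lhs => rw [hd]
    rfl
  rw [show (∑ b ∈ s, f b) d = coeff (d ()) (∑ b ∈ s, f b) from key _,
    show g d = coeff (d ()) g from key _, map_sum, h]
  refine (Finset.sum_subset hs fun k _ hk => ?_).symm
  exact hf k _ (by simpa using hk)

/-- The dual of the factorial powers `f_k(x) = (x−c₀)⋯(x−c_{k−1})` is
`ĝ_k(u) = u^k / ∏_{l=0}^{k} (1 − u c_l)`; that is,
`Σ_k (x−c₀)⋯(x−c_{k−1}) · u^k/((1−uc₀)⋯(1−uc_k)) = 1/(1−xu)` as formal power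
series in `u` (the power series variable `X`). -/
theorem factorial_dual_sequence {K : Type*} [Field K] (x : K) (c : ℕ → K) :
    ∑' k : ℕ,
        (PowerSeries.C (R := K) (∏ i ∈ Finset.range k, (x - c i)) * (PowerSeries.X : PowerSeries K) ^ k *
          (∏ l ∈ Finset.range (k + 1), (1 - PowerSeries.C (R := K) (c l) * PowerSeries.X))⁻¹) =
      (1 - PowerSeries.C (R := K) x * PowerSeries.X)⁻¹ := by
  letI : TopologicalSpace K := ⊥
  haveI : DiscreteTopology K := ⟨rfl⟩
  haveI : T2Space (PowerSeries K) := Pi.t2Space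
  set D : ℕ → PowerSeries K := fun l => 1 - C (c l) * X with hD
  set g : PowerSeries K := (1 - C x * X)⁻¹ with hg
  set f : ℕ → PowerSeries K := fun k =>
    C (∏ i ∈ range k, (x - c i)) * X ^ k * (∏ l ∈ range (k + 1), D l)⁻¹ with hfdef
  -- constant coefficients
  have hcD : ∀ s : Finset ℕ, constantCoeff (∏ l ∈ s, D l) = 1 := by
    intro s; rw [map_prod]
    refine Finset.prod_eq_one fun l _ => ?_
    simp [hD]
  have hcx : constantCoeff (1 - C x * X) = 1 := by simp
  -- telescoping partial sums
  have hpartial : ∀ n : ℕ, ∑ k ∈ range n, f k =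
      g - C (∏ i ∈ range n, (x - c i)) * X ^ n *
        ((1 - C x * X) * ∏ l ∈ range n, D l)⁻¹ := by
    intro n
    induction n with
    | zero => simp [hg, PowerSeries.mul_inv_rev]
    | succ n ih =>
      rw [Finset.sum_range_succ, ih]
      have hU : constantCoeff ((1 - C x * X) * ∏ l ∈ range (n + 1), D l) ≠ 0 := by
        rw [map_mul, hcx, hcD]; norm_num
      have hV : constantCoeff ((1 - C x * X) * ∏ l ∈ range n, D l) ≠ 0 := by
        rw [map_mul, hcx, hcD]; norm_num
      have hW : constantCoeff (∏ l ∈ range (n + 1), D l) ≠ 0 := by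
        rw [hcD]; norm_num
      -- multiply both sides by U := (1 - CxX) * ∏_{l ≤ n} D l
      apply mul_right_cancel₀ (b := ((1 - C x * X) * ∏ l ∈ range (n + 1), D l)) (by
        intro h0
        exact hU (by rw [h0]; simp))
      have e1 : f n * ((1 - C x * X) * ∏ l ∈ range (n + 1), D l) =
          C (∏ i ∈ range n, (x - c i)) * X ^ n * (1 - C x * X) := by
        rw [hfdef]
        have : (∏ l ∈ range (n + 1), D l)⁻¹ * ((1 - C x * X) * ∏ l ∈ range (n + 1), D l)
            = 1 - C x * X := by
          rw [mul_comm (1 - C x * X), ← mul_assoc, PowerSeries.inv_mul_cancel _ hW, one_mul]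
        rw [mul_assoc, this]
      have e2 : C (∏ i ∈ range n, (x - c i)) * X ^ n *
          ((1 - C x * X) * ∏ l ∈ range n, D l)⁻¹ *
          ((1 - C x * X) * ∏ l ∈ range (n + 1), D l) =
          C (∏ i ∈ range n, (x - c i)) * X ^ n * D n := by
        have hsplit : (1 - C x * X) * ∏ l ∈ range (n + 1), D l =
            ((1 - C x * X) * ∏ l ∈ range n, D l) * D n := by
          rw [prod_range_succ]; ring
        rw [hsplit, mul_assoc, ← mul_assoc (((1 - C x * X) * ∏ l ∈ range n, D l))⁻¹,
          PowerSeries.inv_mul_cancel _ hV, one_mul, mul_assoc]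
      have e3 : C (∏ i ∈ range (n + 1), (x - c i)) * X ^ (n + 1) *
          ((1 - C x * X) * ∏ l ∈ range (n + 1), D l)⁻¹ *
          ((1 - C x * X) * ∏ l ∈ range (n + 1), D l) =
          C (∏ i ∈ range (n + 1), (x - c i)) * X ^ (n + 1) := by
        rw [mul_assoc, PowerSeries.inv_mul_cancel _ hU, mul_one]
      rw [prod_range_succ (fun i => x - c i), map_mul, map_sub] at e3 ⊢
      simp only [hD] at e1 e2 e3 ⊢
      linear_combination e1 - e2 + e3
  -- the coefficientwise sum
  have hsum : HasSum f g := by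
    apply hasSum_powerSeries
    · intro n
      have hp := hpartial (n + 1)
      have h0 : coeff n (C (∏ i ∈ range (n + 1), (x - c i)) * X ^ (n + 1) *
          ((1 - C x * X) * ∏ l ∈ range (n + 1), D l)⁻¹) = 0 := by
        have hdvd : (X : PowerSeries K) ^ (n + 1) ∣ C (∏ i ∈ range (n + 1), (x - c i)) *
            X ^ (n + 1) * ((1 - C x * X) * ∏ l ∈ range (n + 1), D l)⁻¹ :=
          ⟨C (∏ i ∈ range (n + 1), (x - c i)) *
            ((1 - C x * X) * ∏ l ∈ range (n + 1), D l)⁻¹, by ring⟩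
        exact PowerSeries.X_pow_dvd_iff.1 hdvd n (Nat.lt_succ_self n)
      calc coeff n g = coeff n (∑ k ∈ range (n + 1), f k) := by
            rw [hp, map_sub, h0, sub_zero]
        _ = ∑ k ∈ range (n + 1), coeff n (f k) := map_sum _ _ _
    · intro k n hn
      have hdvd : (X : PowerSeries K) ^ k ∣ f k :=
        ⟨C (∏ i ∈ range k, (x - c i)) * (∏ l ∈ range (k + 1), D l)⁻¹, by rw [hfdef]; ring⟩
      exact PowerSeries.X_pow_dvd_iff.1 hdvd n hn
  exact hsum.tsum_eq
end

section
/- (Dual Cauchy identity, type A ninth variation) Let F be an admissible sequence and s_λ^F the associated generalized Schur functions. Then Σ_{λ ⊆ (m^n)} (−1)^{|λ̃|} s_λ^F(x_1,…,x_n) s_{λ̃}^F(y_1,…,y_m) = ∏_{i=1}^n ∏_{j=1}^m (x_i − y_j), where λ̃ = (n − λ'_m, n − λ'_{m−1}, …, n − λ'_1) and λ' is the conjugate partition. -/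
/-- The generalised Schur function `s_λ^F(x₁,…,xₙ) = det[f_{λⱼ+n−j}(xᵢ)]/V(x)`. -/
noncomputable def genSchur {K : Type*} [Field K] {n : ℕ} (F : ℕ → Polynomial K)
    (x : Fin n → K) (l : Fin n → ℕ) : K :=
  (Matrix.of fun i j : Fin n => (F (l j + (n - 1 - (j : ℕ)))).eval (x i)).det /
    vandermondeProd x

open Finset Equiv Equiv.Perm Polynomial Matrix

namespace DualCauchyAux

variable {n m : ℕ}

lemma strictMono_gap {k N : ℕ} {g : Fin k → Fin N} (hg : StrictMono g) :
    ∀ (bv : ℕ) (hb : bv < k) (a : Fin k), (a : ℕ) ≤ bv →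
      (g a : ℕ) + (bv - (a : ℕ)) ≤ (g ⟨bv, hb⟩ : ℕ) := by
  intro bv
  induction bv with
  | zero =>
    intro hb a ha
    have : a = ⟨0, hb⟩ := Fin.ext (Nat.le_zero.mp ha)
    subst this; simp
  | succ bv ih =>
    intro hb a ha
    rcases Nat.lt_or_ge (a : ℕ) (bv + 1) with h | h
    · have h1 := ih (Nat.lt_of_succ_lt hb) a (Nat.lt_succ_iff.mp h)
      have h2 : g ⟨bv, Nat.lt_of_succ_lt hb⟩ < g ⟨bv + 1, hb⟩ := hg (by simp [Fin.lt_def])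
      rw [Fin.lt_def] at h2
      omega
    · have : a = ⟨bv + 1, hb⟩ := Fin.ext (le_antisymm ha h)
      subst this; simp

lemma strictMono_gap' {k N : ℕ} {g : Fin k → Fin N} (hg : StrictMono g) {a b : Fin k}
    (hab : a ≤ b) : (g a : ℕ) + ((b : ℕ) - (a : ℕ)) ≤ (g b : ℕ) := by
  have h := strictMono_gap hg (b : ℕ) b.isLt a hab
  simpa using h

lemma strictMono_le {k N : ℕ} {g : Fin k → Fin N} (hg : StrictMono g) (a : Fin k) :
    (a : ℕ) ≤ (g a : ℕ) := by
  have h := strictMono_gap' hg (show (⟨0, Nat.zero_lt_of_lt a.isLt⟩ : Fin k) ≤ a from Fin.mk_le_of_le_val (Nat.zero_le _))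
  simp only [Nat.sub_zero] at h
  omega

lemma card_filter_val_lt (c : ℕ) (hc : c ≤ n) :
    ((univ : Finset (Fin n)).filter fun a : Fin n => (a : ℕ) < c).card = c := by
  have key : ((univ : Finset (Fin n)).filter fun a : Fin n => (a : ℕ) < c).card =
      (Finset.range c).card := by
    refine Finset.card_bij' (fun (a : Fin n) _ => (a : ℕ))
        (fun (j : ℕ) hj => (⟨j, lt_of_lt_of_le (Finset.mem_range.mp hj) hc⟩ : Fin n))
        (fun a ha => ?_) (fun j hj => ?_) (fun a ha => ?_) (fun j hj => ?_)
    · simp only [mem_filter] at ha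
      exact Finset.mem_range.mpr ha.2
    · simp only [mem_filter, mem_univ, true_and]
      exact Finset.mem_range.mp hj
    · simp
    · simp
  rw [key, Finset.card_range]

lemma card_filter_val_le (c : ℕ) (hc : c ≤ n) :
    ((univ : Finset (Fin n)).filter fun a : Fin n => c ≤ (a : ℕ)).card = n - c := by
  have h1 : ((univ : Finset (Fin n)).filter fun a : Fin n => c ≤ (a : ℕ)) =
      (univ : Finset (Fin n)).filter fun a : Fin n => ¬ ((a : ℕ) < c) := by
    apply Finset.filter_congr; intro a _; simp [not_lt]
  rw [h1, Finset.filter_not, Finset.card_sdiff_of_subset (filter_subset _ _), card_univ, Fintype.card_fin,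
    card_filter_val_lt c hc]

/-- number of rows with `l r ≥ k` -/
def cnt (l : Fin n → Fin (m + 1)) (k : ℕ) : ℕ :=
  (Finset.univ.filter fun r : Fin n => k ≤ (l r : ℕ)).card

lemma cnt_le (l : Fin n → Fin (m + 1)) (k : ℕ) : cnt l k ≤ n :=
  le_trans (Finset.card_filter_le _ _) (by simp)

lemma cnt_anti (l : Fin n → Fin (m + 1)) {k k' : ℕ} (h : k ≤ k') : cnt l k' ≤ cnt l k :=
  Finset.card_le_card (Finset.monotone_filter_right _ (fun r _ hr => le_trans h hr))

lemma lt_cnt_iff {l : Fin n → Fin (m + 1)} (hl : ∀ i j : Fin n, i ≤ j → l j ≤ l i) (k : ℕ)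
    (a : Fin n) : (a : ℕ) < cnt l k ↔ k ≤ (l a : ℕ) := by
  constructor
  · intro h
    by_contra hk
    have hsub : (univ.filter fun r : Fin n => k ≤ (l r : ℕ)) ⊆
        univ.filter fun r : Fin n => (r : ℕ) < (a : ℕ) := by
      intro r hr
      simp only [mem_filter, mem_univ, true_and] at hr ⊢
      by_contra hra
      have har : a ≤ r := by rw [Fin.le_def]; omega
      have := hl a r har
      rw [Fin.le_def] at this
      omega
    have hcard := Finset.card_le_card hsub
    rw [card_filter_val_lt (a : ℕ) a.isLt.le] at hcard
    exact absurd h (by unfold cnt; omega)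
  · intro h
    have hsub : (univ.filter fun r : Fin n => (r : ℕ) < (a : ℕ) + 1) ⊆
        univ.filter fun r : Fin n => k ≤ (l r : ℕ) := by
      intro r hr
      simp only [mem_filter, mem_univ, true_and] at hr ⊢
      have har : r ≤ a := by rw [Fin.le_def]; omega
      have := hl r a har
      rw [Fin.le_def] at this
      omega
    have hcard := Finset.card_le_card hsub
    rw [card_filter_val_lt ((a : ℕ) + 1) a.isLt] at hcard
    exact lt_of_lt_of_le (Nat.lt_succ_self _) hcard

/-- the strictly increasing enumeration of the "x-columns" -/
def Gm (l : Fin n → Fin (m + 1)) (a : Fin n) : Fin (n + m) :=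
  ⟨(a : ℕ) + (m - (l a : ℕ)), by have := a.isLt; omega⟩

/-- the strictly increasing enumeration of the "y-columns" -/
def Hm (l : Fin n → Fin (m + 1)) (b : Fin m) : Fin (n + m) :=
  ⟨(b : ℕ) + cnt l ((m - 1 - (b : ℕ)) + 1), by
    have := b.isLt; have := cnt_le l ((m - 1 - (b : ℕ)) + 1); omega⟩

lemma Gm_strictMono {l : Fin n → Fin (m + 1)} (hl : ∀ i j : Fin n, i ≤ j → l j ≤ l i) :
    StrictMono (Gm l) := by
  intro a b hab
  have h1 := hl a b hab.le
  rw [Fin.le_def] at h1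
  have h2 : (a : ℕ) < (b : ℕ) := hab
  have h3 := (l a).isLt
  simp only [Gm, Fin.mk_lt_mk]
  omega

lemma Hm_strictMono {l : Fin n → Fin (m + 1)} : StrictMono (Hm l) := by
  intro b b' hbb
  have h2 : (b : ℕ) < (b' : ℕ) := hbb
  have h1 : cnt l ((m - 1 - (b : ℕ)) + 1) ≤ cnt l ((m - 1 - (b' : ℕ)) + 1) :=
    cnt_anti l (by omega)
  simp only [Hm, Fin.mk_lt_mk]
  omega

lemma Gm_ne_Hm {l : Fin n → Fin (m + 1)} (hl : ∀ i j : Fin n, i ≤ j → l j ≤ l i) (a : Fin n)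
    (b : Fin m) : Gm l a ≠ Hm l b := by
  intro h
  have h0 : ((Gm l a : Fin (n + m)) : ℕ) = ((Hm l b : Fin (n + m)) : ℕ) := congrArg Fin.val h
  simp only [Gm, Hm] at h0
  have h1 := lt_cnt_iff hl ((m - 1 - (b : ℕ)) + 1) a
  have h2 := (l a).isLt
  have h3 := b.isLt
  have h4 := cnt_le l ((m - 1 - (b : ℕ)) + 1)
  omega

lemma card_Hm_le_Gm {l : Fin n → Fin (m + 1)} (hl : ∀ i j : Fin n, i ≤ j → l j ≤ l i)
    (b : Fin m) : (univ.filter fun a : Fin n => Hm l b ≤ Gm l a).card =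
      n - cnt l ((m - 1 - (b : ℕ)) + 1) := by
  have h1 : (univ.filter fun a : Fin n => Hm l b ≤ Gm l a) =
      univ.filter fun a : Fin n => cnt l ((m - 1 - (b : ℕ)) + 1) ≤ (a : ℕ) := by
    apply Finset.filter_congr
    intro a _
    simp only [Fin.le_def, Gm, Hm]
    have hiff := lt_cnt_iff hl ((m - 1 - (b : ℕ)) + 1) a
    have h2 := (l a).isLt
    have h3 := b.isLt
    constructor
    · intro h; omega
    · intro h; omega
  rw [h1, card_filter_val_le _ (cnt_le l _)]

lemma sign_eq_signAux {N : ℕ} (f : Perm (Fin N)) :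
    Equiv.Perm.sign f = Equiv.Perm.signAux f := by
  have key : ∀ (s : Multiset (Fin N)) (hs : ∀ x, x ∈ s), Equiv.Perm.signAux3 f hs =
      Equiv.Perm.signAux f := by
    intro s
    induction s using Quotient.inductionOn with
    | _ l =>
      intro hs
      show Equiv.Perm.signAux2 l f = Equiv.Perm.signAux f
      rw [← Equiv.Perm.signAux_eq_signAux2 l f (Equiv.refl _) (fun x _ => hs x)]
      congr 1
  exact key Finset.univ.val (fun x => Finset.mem_univ x)

lemma finPairsLT_eq (N : ℕ) : Equiv.Perm.finPairsLT N =
    univ.filter (fun x : Σ _ : Fin N, Fin N => x.2 < x.1) := by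
  ext x
  simp [Equiv.Perm.mem_finPairsLT]

section Shuffle

variable {l : Fin n → Fin (m + 1)} (hl : ∀ i j : Fin n, i ≤ j → l j ≤ l i)

/-- The shuffle equivalence determined by `l`. -/
noncomputable def shuffleEquiv (l : Fin n → Fin (m + 1))
    (hl : ∀ i j : Fin n, i ≤ j → l j ≤ l i) : (Fin n ⊕ Fin m) ≃ Fin (n + m) :=
  Equiv.ofBijective (Sum.elim (Gm l) (Hm l)) (by
    rw [Fintype.bijective_iff_injective_and_card]
    constructor
    · rintro (a | a) (b | b) h
      · simp only [Sum.elim_inl] at h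
        exact congrArg Sum.inl ((Gm_strictMono hl).injective h)
      · exact absurd h (Gm_ne_Hm hl a b)
      · exact absurd h.symm (Gm_ne_Hm hl b a)
      · simp only [Sum.elim_inr] at h
        exact congrArg Sum.inr (Hm_strictMono.injective h)
    · simp)

@[simp] lemma shuffleEquiv_inl (a : Fin n) : shuffleEquiv l hl (Sum.inl a) = Gm l a := rfl

@[simp] lemma shuffleEquiv_inr (b : Fin m) : shuffleEquiv l hl (Sum.inr b) = Hm l b := rfl

/-- The shuffle permutation determined by `l`. -/
noncomputable def shufflePerm (l : Fin n → Fin (m + 1))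
    (hl : ∀ i j : Fin n, i ≤ j → l j ≤ l i) : Equiv.Perm (Fin (n + m)) :=
  finSumFinEquiv.symm.trans (shuffleEquiv l hl)

lemma shufflePerm_castAdd (a : Fin n) :
    shufflePerm l hl (Fin.castAdd m a) = Gm l a := by
  simp [shufflePerm, finSumFinEquiv_symm_apply_castAdd]

lemma shufflePerm_natAdd (b : Fin m) :
    shufflePerm l hl (Fin.natAdd n b) = Hm l b := by
  simp [shufflePerm, finSumFinEquiv_symm_apply_natAdd]

lemma sign_shufflePerm :
    Equiv.Perm.sign (shufflePerm l hl) =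
      (-1 : ℤˣ) ^ (∑ b : Fin m, (n - cnt l ((m - 1 - (b : ℕ)) + 1))) := by
  rw [sign_eq_signAux]
  unfold Equiv.Perm.signAux
  rw [finPairsLT_eq, Finset.prod_filter, ← Finset.univ_sigma_univ, Finset.prod_sigma]
  set σ := shufflePerm l hl with hσ
  have key : ∀ i j : Fin (n + m),
      (if j < i then (if σ i ≤ σ j then (-1 : ℤˣ) else 1) else 1) =
        (fun i j => if j < i then (if σ i ≤ σ j then (-1 : ℤˣ) else 1) else 1) i j :=
    fun _ _ => rfl
  have reidx : ∀ f : Fin (n + m) → ℤˣ, ∏ i : Fin (n + m), f i =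
      (∏ a : Fin n, f (Fin.castAdd m a)) * ∏ b : Fin m, f (Fin.natAdd n b) := by
    intro f
    rw [← (finSumFinEquiv (m := n) (n := m)).prod_comp f, Fintype.prod_sum_type]
    simp [finSumFinEquiv_apply_left, finSumFinEquiv_apply_right]
  calc
    (∏ i : Fin (n + m), ∏ j : Fin (n + m),
        if j < i then (if σ i ≤ σ j then (-1 : ℤˣ) else 1) else 1)
      = ∏ b : Fin m, (-1 : ℤˣ) ^ (n - cnt l ((m - 1 - (b : ℕ)) + 1)) := by
        rw [reidx]
        have hx : (∏ a : Fin n, ∏ j : Fin (n + m),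
            if j < Fin.castAdd m a then (if σ (Fin.castAdd m a) ≤ σ j then (-1 : ℤˣ) else 1)
              else 1) = 1 := by
          apply Finset.prod_eq_one
          intro a _
          rw [reidx]
          have h1 : (∏ a' : Fin n, if Fin.castAdd m a' < Fin.castAdd m a then
              (if σ (Fin.castAdd m a) ≤ σ (Fin.castAdd m a') then (-1 : ℤˣ) else 1) else 1) = 1 := by
            apply Finset.prod_eq_one
            intro a' _
            by_cases h : Fin.castAdd m a' < Fin.castAdd m a
            · rw [if_pos h]
              have ha : a' < a := by
                rw [Fin.lt_def] at h ⊢; simpa using h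
              have := Gm_strictMono hl ha
              rw [if_neg (by
                rw [hσ, shufflePerm_castAdd, shufflePerm_castAdd]
                exact not_le.mpr this)]
            · rw [if_neg h]
          have h2 : (∏ b : Fin m, if Fin.natAdd n b < Fin.castAdd m a then
              (if σ (Fin.castAdd m a) ≤ σ (Fin.natAdd n b) then (-1 : ℤˣ) else 1) else 1) = 1 := by
            apply Finset.prod_eq_one
            intro b _
            rw [if_neg (by
              rw [Fin.lt_def]
              simp only [Fin.coe_natAdd, Fin.coe_castAdd]
              have := a.isLt
              omega)]
          rw [h1, h2, one_mul]
        rw [hx, one_mul]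
        apply Finset.prod_congr rfl
        intro b _
        rw [reidx]
        have h2 : (∏ b' : Fin m, if Fin.natAdd n b' < Fin.natAdd n b then
            (if σ (Fin.natAdd n b) ≤ σ (Fin.natAdd n b') then (-1 : ℤˣ) else 1) else 1) = 1 := by
          apply Finset.prod_eq_one
          intro b' _
          by_cases h : Fin.natAdd n b' < Fin.natAdd n b
          · rw [if_pos h]
            have hb : b' < b := by
              rw [Fin.lt_def] at h ⊢
              simp only [Fin.coe_natAdd] at h
              omega
            have := Hm_strictMono (l := l) hb
            rw [if_neg (by
              rw [hσ, shufflePerm_natAdd, shufflePerm_natAdd]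
              exact not_le.mpr this)]
          · rw [if_neg h]
        rw [h2, mul_one]
        have h3 : (∏ a : Fin n, if Fin.castAdd m a < Fin.natAdd n b then
            (if σ (Fin.natAdd n b) ≤ σ (Fin.castAdd m a) then (-1 : ℤˣ) else 1) else 1) =
            ∏ a : Fin n, (if Hm l b ≤ Gm l a then (-1 : ℤˣ) else 1) := by
          apply Finset.prod_congr rfl
          intro a _
          rw [if_pos (by
            rw [Fin.lt_def]
            simp only [Fin.coe_natAdd, Fin.coe_castAdd]
            have := a.isLt
            omega)]
          rw [hσ, shufflePerm_natAdd, shufflePerm_castAdd]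
        rw [h3, Finset.prod_ite, Finset.prod_const, Finset.prod_const, one_pow, mul_one,
          card_Hm_le_Gm hl b]
    _ = (-1 : ℤˣ) ^ (∑ b : Fin m, (n - cnt l ((m - 1 - (b : ℕ)) + 1))) := by
        rw [Finset.prod_pow_eq_pow_sum]

end Shuffle

section Bijection

variable {l l' : Fin n → Fin (m + 1)}

lemma eq_of_image_Gm_eq (hl : ∀ i j : Fin n, i ≤ j → l j ≤ l i)
    (hl' : ∀ i j : Fin n, i ≤ j → l' j ≤ l' i)
    (h : univ.image (Gm l) = univ.image (Gm l')) : l = l' := by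
  have hc : (univ.image (Gm l)).card = n := by
    rw [Finset.card_image_of_injective _ (Gm_strictMono hl).injective, card_univ,
      Fintype.card_fin]
  have e1 : Gm l = ⇑((univ.image (Gm l)).orderEmbOfFin hc) :=
    Finset.orderEmbOfFin_unique hc (fun x => mem_image_of_mem _ (mem_univ x)) (Gm_strictMono hl)
  have e2 : Gm l' = ⇑((univ.image (Gm l)).orderEmbOfFin hc) :=
    Finset.orderEmbOfFin_unique hc (fun x => h ▸ mem_image_of_mem _ (mem_univ x))
      (Gm_strictMono hl')
  funext a
  have h3 : Gm l a = Gm l' a := by rw [e1, e2]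
  have h4 := congrArg Fin.val h3
  simp only [Gm] at h4
  have h5 := (l a).isLt
  have h6 := (l' a).isLt
  exact Fin.ext (by omega)

lemma card_antitone_subtype :
    Fintype.card {l : Fin n → Fin (m + 1) // ∀ i j : Fin n, i ≤ j → l j ≤ l i} =
      (n + m).choose n := by
  have := Fintype.card_finset_len (α := Fin (n + m)) n
  rw [Fintype.card_fin] at this
  rw [← this]
  apply Fintype.card_of_bijective
    (f := fun l : {l : Fin n → Fin (m + 1) // ∀ i j : Fin n, i ≤ j → l j ≤ l i} =>
      (⟨univ.image (Gm l.1), by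
        rw [Finset.card_image_of_injective _ (Gm_strictMono l.2).injective, card_univ,
          Fintype.card_fin]⟩ : {s : Finset (Fin (n + m)) // s.card = n}))
  constructor
  · intro a b h
    exact Subtype.ext (eq_of_image_Gm_eq a.2 b.2 (congrArg Subtype.val h))
  · rintro ⟨S, hS⟩
    have hmono : StrictMono ⇑(S.orderEmbOfFin hS) := (S.orderEmbOfFin hS).strictMono
    have hle : ∀ a : Fin n, (a : ℕ) ≤ ((S.orderEmbOfFin hS) a : ℕ) := fun a =>
      strictMono_le hmono a
    have hub : ∀ a : Fin n, ((S.orderEmbOfFin hS) a : ℕ) ≤ m + (a : ℕ) := by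
      intro a
      have hn : 0 < n := a.pos
      have hlast : a ≤ (⟨n - 1, by omega⟩ : Fin n) := by
        rw [Fin.le_def]
        have := a.isLt
        simp only
        omega
      have h1 := strictMono_gap' hmono hlast
      have h2 := ((S.orderEmbOfFin hS) ⟨n - 1, by omega⟩).isLt
      have h3 := a.isLt
      simp only at h1
      omega
    refine ⟨⟨fun a => ⟨m + (a : ℕ) - ((S.orderEmbOfFin hS) a : ℕ), by
        have := hle a; omega⟩, ?_⟩, ?_⟩
    · intro i j hij
      rw [Fin.le_def]
      simp only
      have h1 := strictMono_gap' hmono hij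
      have h2 := hle i
      have h3 := hub j
      rw [Fin.le_def] at hij
      omega
    · apply Subtype.ext
      simp only
      have hGm : Gm (fun a => (⟨m + (a : ℕ) - ((S.orderEmbOfFin hS) a : ℕ), by
          have := hle a; omega⟩ : Fin (m + 1))) = ⇑(S.orderEmbOfFin hS) := by
        funext a
        apply Fin.ext
        simp only [Gm]
        have h2 := hle a
        have h3 := hub a
        omega
      rw [hGm]
      apply Finset.coe_injective
      rw [Finset.coe_image, Finset.coe_univ, Set.image_univ, Finset.range_orderEmbOfFin]

/-- The decomposition map of the Laplace expansion. -/
noncomputable def bigMap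
    (d : Σ _ : {l : Fin n → Fin (m + 1) // ∀ i j : Fin n, i ≤ j → l j ≤ l i},
      Perm (Fin n) × Perm (Fin m)) : Perm (Fin (n + m)) :=
  (shufflePerm d.1.1 d.1.2) * (finSumFinEquiv.permCongr (Equiv.sumCongr d.2.1 d.2.2))

lemma bigMap_castAdd
    (d : Σ _ : {l : Fin n → Fin (m + 1) // ∀ i j : Fin n, i ≤ j → l j ≤ l i},
      Perm (Fin n) × Perm (Fin m)) (a : Fin n) :
    bigMap d (Fin.castAdd m a) = Gm d.1.1 (d.2.1 a) := by
  simp only [bigMap, Equiv.Perm.mul_apply, Equiv.permCongr_apply,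
    finSumFinEquiv_symm_apply_castAdd, Equiv.sumCongr_apply, Sum.map_inl,
    finSumFinEquiv_apply_left]
  exact shufflePerm_castAdd d.1.2 (d.2.1 a)

lemma bigMap_natAdd
    (d : Σ _ : {l : Fin n → Fin (m + 1) // ∀ i j : Fin n, i ≤ j → l j ≤ l i},
      Perm (Fin n) × Perm (Fin m)) (b : Fin m) :
    bigMap d (Fin.natAdd n b) = Hm d.1.1 (d.2.2 b) := by
  simp only [bigMap, Equiv.Perm.mul_apply, Equiv.permCongr_apply,
    finSumFinEquiv_symm_apply_natAdd, Equiv.sumCongr_apply, Sum.map_inr,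
    finSumFinEquiv_apply_right]
  exact shufflePerm_natAdd d.1.2 (d.2.2 b)

lemma sign_bigMap
    (d : Σ _ : {l : Fin n → Fin (m + 1) // ∀ i j : Fin n, i ≤ j → l j ≤ l i},
      Perm (Fin n) × Perm (Fin m)) :
    Equiv.Perm.sign (bigMap d) =
      Equiv.Perm.sign (shufflePerm d.1.1 d.1.2) * Equiv.Perm.sign d.2.1 *
        Equiv.Perm.sign d.2.2 := by
  rw [bigMap, Equiv.Perm.sign_mul, Equiv.Perm.sign_permCongr, Equiv.Perm.sign_sumCongr,
    mul_assoc]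

lemma bigMap_injective :
    Function.Injective (bigMap (n := n) (m := m)) := by
  rintro ⟨⟨l, hl⟩, π, ρ⟩ ⟨⟨l', hl'⟩, π', ρ'⟩ h
  have hG : ∀ a : Fin n, Gm l (π a) = Gm l' (π' a) := by
    intro a
    have h1 := DFunLike.congr_fun h (Fin.castAdd m a)
    rwa [bigMap_castAdd, bigMap_castAdd] at h1
  have hH : ∀ b : Fin m, Hm l (ρ b) = Hm l' (ρ' b) := by
    intro b
    have h1 := DFunLike.congr_fun h (Fin.natAdd n b)
    rwa [bigMap_natAdd, bigMap_natAdd] at h1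
  have himg : univ.image (Gm l) = univ.image (Gm l') := by
    have e1 : univ.image (fun a => Gm l (π a)) = univ.image (Gm l) := by
      rw [show (fun a => Gm l (π a)) = Gm l ∘ ⇑π from rfl, ← Finset.image_image,
        Finset.image_univ_of_surjective π.surjective]
    have e2 : univ.image (fun a => Gm l' (π' a)) = univ.image (Gm l') := by
      rw [show (fun a => Gm l' (π' a)) = Gm l' ∘ ⇑π' from rfl, ← Finset.image_image,
        Finset.image_univ_of_surjective π'.surjective]
    rw [← e1, ← e2]
    congr 1
    exact funext hG
  have hll : l = l' := eq_of_image_Gm_eq hl hl' himg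
  subst hll
  have hπ : π = π' := Equiv.ext fun a => (Gm_strictMono hl).injective (hG a)
  have hρ : ρ = ρ' := Equiv.ext fun b => Hm_strictMono.injective (hH b)
  subst hπ
  subst hρ
  rfl

lemma bigMap_bijective :
    Function.Bijective (bigMap (n := n) (m := m)) := by
  rw [Fintype.bijective_iff_injective_and_card]
  refine ⟨bigMap_injective, ?_⟩
  rw [Fintype.card_perm, Fintype.card_fin, Fintype.card_sigma]
  simp only [Fintype.card_prod, Fintype.card_perm, Fintype.card_fin]
  rw [Finset.sum_const, card_univ, card_antitone_subtype, smul_eq_mul]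
  have h := Nat.choose_mul_factorial_mul_factorial (show n ≤ n + m by omega)
  rw [Nat.add_sub_cancel_left] at h
  rw [← h]
  ring

end Bijection

section Det

variable {K : Type*} [Field K]

lemma deg_Gm (l : Fin n → Fin (m + 1)) (a : Fin n) :
    (n + m) - 1 - (Gm l a : ℕ) = (l a : ℕ) + (n - 1 - (a : ℕ)) := by
  have := a.isLt
  have := (l a).isLt
  simp only [Gm]
  omega

lemma deg_Hm (l : Fin n → Fin (m + 1)) (b : Fin m) :
    (n + m) - 1 - (Hm l b : ℕ) =
      (n - cnt l ((m - 1 - (b : ℕ)) + 1)) + (m - 1 - (b : ℕ)) := by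
  have := b.isLt
  have := cnt_le l ((m - 1 - (b : ℕ)) + 1)
  simp only [Hm]
  omega

lemma det_expand (F : ℕ → Polynomial K) (x : Fin n → K) (y : Fin m → K) :
    (Matrix.of fun i j : Fin (n + m) =>
        (F ((n + m) - 1 - (i : ℕ))).eval (Fin.append x y j)).det
      = ∑ l : {l : Fin n → Fin (m + 1) // ∀ i j : Fin n, i ≤ j → l j ≤ l i},
          (((Equiv.Perm.sign (shufflePerm l.1 l.2) : ℤ) : K)
            * (Matrix.of fun i j : Fin n =>
                (F ((l.1 j : ℕ) + (n - 1 - (j : ℕ)))).eval (x i)).det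
            * (Matrix.of fun i j : Fin m =>
                (F ((n - cnt l.1 ((m - 1 - (j : ℕ)) + 1)) + (m - 1 - (j : ℕ)))).eval (y i)).det) := by
  rw [Matrix.det_apply']
  rw [← Function.Bijective.sum_comp (bigMap_bijective (n := n) (m := m))]
  rw [← Finset.univ_sigma_univ, Finset.sum_sigma]
  apply Finset.sum_congr rfl
  rintro ⟨l, hl⟩ -
  set Bx : Matrix (Fin n) (Fin n) K :=
    Matrix.of fun p a : Fin n => (F ((l p : ℕ) + (n - 1 - (p : ℕ)))).eval (x a) with hBx
  set By : Matrix (Fin m) (Fin m) K :=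
    Matrix.of fun p b : Fin m =>
      (F ((n - cnt l ((m - 1 - (p : ℕ)) + 1)) + (m - 1 - (p : ℕ)))).eval (y b) with hBy
  have hdetx : (Matrix.of fun i j : Fin n =>
      (F ((l j : ℕ) + (n - 1 - (j : ℕ)))).eval (x i)).det = Bx.det := by
    rw [← Matrix.det_transpose Bx]
    rfl
  have hdety : (Matrix.of fun i j : Fin m =>
      (F ((n - cnt l ((m - 1 - (j : ℕ)) + 1)) + (m - 1 - (j : ℕ)))).eval (y i)).det = By.det := by
    rw [← Matrix.det_transpose By]
    rfl
  simp only
  rw [hdetx, hdety, Matrix.det_apply' Bx, Matrix.det_apply' By]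
  rw [Fintype.sum_prod_type]
  rw [mul_assoc, Finset.sum_mul_sum, Finset.mul_sum]
  apply Finset.sum_congr rfl
  rintro π -
  rw [Finset.mul_sum]
  apply Finset.sum_congr rfl
  rintro ρ -
  have hprod : (∏ i : Fin (n + m),
      (Matrix.of fun i j : Fin (n + m) =>
        (F ((n + m) - 1 - (i : ℕ))).eval (Fin.append x y j))
        (bigMap ⟨⟨l, hl⟩, (π, ρ)⟩ i) i)
      = (∏ a : Fin n, Bx (π a) a) * ∏ b : Fin m, By (ρ b) b := by
    rw [← (finSumFinEquiv (m := n) (n := m)).prod_comp, Fintype.prod_sum_type]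
    congr 1
    · apply Finset.prod_congr rfl
      rintro a -
      rw [finSumFinEquiv_apply_left, bigMap_castAdd]
      simp only [Matrix.of_apply, Fin.append_left]
      rw [deg_Gm]
      rfl
    · apply Finset.prod_congr rfl
      rintro b -
      rw [finSumFinEquiv_apply_right, bigMap_natAdd]
      simp only [Matrix.of_apply, Fin.append_right]
      rw [deg_Hm]
      rfl
  rw [hprod, sign_bigMap]
  push_cast [Units.val_mul]
  ring

end Det

section Vandermonde

variable {K : Type*} [Field K] {N : ℕ}

lemma vandermondeProd_rev (v : Fin N → K) :
    (∏ i : Fin N, ∏ j ∈ Finset.Ioi i, (v (Fin.rev j) - v (Fin.rev i))) = vandermondeProd v := by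
  unfold vandermondeProd
  rw [Finset.prod_sigma', Finset.prod_sigma']
  apply Finset.prod_nbij' (fun p : Σ _ : Fin N, Fin N => (⟨Fin.rev p.2, Fin.rev p.1⟩ : Σ _ : Fin N, Fin N))
    (fun p : Σ _ : Fin N, Fin N => (⟨Fin.rev p.2, Fin.rev p.1⟩ : Σ _ : Fin N, Fin N))
  · rintro ⟨a, b⟩ hab
    simp only [Finset.mem_sigma, Finset.mem_univ, Finset.mem_Ioi, true_and] at hab ⊢
    exact Fin.rev_lt_rev.mpr hab
  · rintro ⟨a, b⟩ hab
    simp only [Finset.mem_sigma, Finset.mem_univ, Finset.mem_Ioi, true_and] at hab ⊢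
    exact Fin.rev_lt_rev.mpr hab
  · rintro ⟨a, b⟩ _
    simp
  · rintro ⟨a, b⟩ _
    simp
  · rintro ⟨a, b⟩ _
    simp

lemma vandermondeProd_eq_sign_mul (v : Fin N → K) :
    vandermondeProd v =
      ((Equiv.Perm.sign (Fin.revPerm (n := N)) : ℤ) : K) * (Matrix.vandermonde v).det := by
  have h0 : Matrix.vandermonde (v ∘ Fin.rev) =
      (Matrix.vandermonde v).submatrix Fin.revPerm id := by
    ext i j
    simp [Matrix.vandermonde_apply, Matrix.submatrix_apply]
  have h1 : (Matrix.vandermonde (v ∘ Fin.rev)).det =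
      ((Equiv.Perm.sign (Fin.revPerm (n := N)) : ℤ) : K) * (Matrix.vandermonde v).det := by
    rw [h0, Matrix.det_permute]
  have h2 := Matrix.det_vandermonde (v ∘ Fin.rev)
  rw [h1] at h2
  rw [h2]
  simp only [Function.comp_apply]
  rw [vandermondeProd_rev]

lemma det_M_eq (F : ℕ → Polynomial K) (hmonic : ∀ k, (F k).Monic)
    (hdeg : ∀ k, (F k).natDegree = k) (v : Fin N → K) :
    (Matrix.of fun i j : Fin N => (F (N - 1 - (i : ℕ))).eval (v j)).det =
      vandermondeProd v := by
  have hM : (Matrix.of fun i j : Fin N => (F (N - 1 - (i : ℕ))).eval (v j)) =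
      ((Matrix.of fun i j : Fin N => (F (j : ℕ)).eval (v i))ᵀ).submatrix Fin.revPerm id := by
    ext i j
    simp only [Matrix.submatrix_apply, Matrix.transpose_apply, Matrix.of_apply, Fin.revPerm_apply,
      id_eq, Fin.val_rev]
    congr 2
    have := i.isLt
    omega
  rw [hM, Matrix.det_permute, Matrix.det_transpose]
  rw [← Matrix.det_eval_matrixOfPolynomials_eq_det_vandermonde v (fun j : Fin N => F (j : ℕ))
    (fun j => hdeg (j : ℕ)) (fun j => hmonic (j : ℕ))]
  rw [vandermondeProd_eq_sign_mul]

lemma vandermondeProd_append (x : Fin n → K) (y : Fin m → K) :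
    vandermondeProd (Fin.append x y) =
      vandermondeProd x * vandermondeProd y * ∏ i : Fin n, ∏ j : Fin m, (x i - y j) := by
  have hIoi : ∀ (N : ℕ) (g : Fin N → K) (i : Fin N),
      ∏ j ∈ Finset.Ioi i, g j = ∏ j : Fin N, if i < j then g j else 1 := by
    intro N g i
    rw [Finset.prod_ite, Finset.prod_const_one, mul_one]
    congr 1
    exact Finset.filter_lt_eq_Ioi.symm
  unfold vandermondeProd
  calc
    (∏ i : Fin (n + m), ∏ j ∈ Finset.Ioi i, (Fin.append x y i - Fin.append x y j))
      = ∏ i : Fin (n + m), ∏ j : Fin (n + m),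
          if i < j then Fin.append x y i - Fin.append x y j else 1 := by
        apply Finset.prod_congr rfl
        intro i _
        exact hIoi _ _ i
    _ = (∏ a : Fin n, ((∏ a' : Fin n, if a < a' then x a - x a' else 1) *
          ∏ _b : Fin m, (x a - Fin.append x y (Fin.natAdd n _b)))) *
        ∏ b : Fin m, ∏ b' : Fin m, if b < b' then y b - y b' else 1 := by
        rw [Fin.prod_univ_add]
        congr 1
        · apply Finset.prod_congr rfl
          intro a _
          rw [Fin.prod_univ_add]
          congr 1
          · apply Finset.prod_congr rfl
            intro a' _
            have hlt : Fin.castAdd m a < Fin.castAdd m a' ↔ a < a' := by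
              rw [Fin.lt_def, Fin.lt_def]
              simp
            simp only [Fin.append_left]
            by_cases h : a < a'
            · rw [if_pos (hlt.mpr h), if_pos h]
            · rw [if_neg (fun hc => h (hlt.mp hc)), if_neg h]
          · apply Finset.prod_congr rfl
            intro b _
            rw [if_pos (by
              rw [Fin.lt_def]
              simp only [Fin.coe_castAdd, Fin.coe_natAdd]
              have := a.isLt
              omega)]
            rw [Fin.append_left]
        · apply Finset.prod_congr rfl
          intro b _
          rw [Fin.prod_univ_add]
          have h3 : (∏ a : Fin n, if Fin.natAdd n b < Fin.castAdd m a then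
              Fin.append x y (Fin.natAdd n b) - Fin.append x y (Fin.castAdd m a) else 1) = 1 := by
            apply Finset.prod_eq_one
            intro a _
            rw [if_neg (by
              rw [Fin.lt_def]
              simp only [Fin.coe_castAdd, Fin.coe_natAdd]
              have := a.isLt
              omega)]
          rw [h3, one_mul]
          apply Finset.prod_congr rfl
          intro b' _
          have hlt : Fin.natAdd n b < Fin.natAdd n b' ↔ b < b' := by
            rw [Fin.lt_def, Fin.lt_def]
            simp
          simp only [Fin.append_right]
          by_cases h : b < b'
          · rw [if_pos (hlt.mpr h), if_pos h]
          · rw [if_neg (fun hc => h (hlt.mp hc)), if_neg h]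
    _ = (vandermondeProd x * ∏ a : Fin n, ∏ b : Fin m, (x a - y b)) * vandermondeProd y := by
        rw [Finset.prod_mul_distrib]
        unfold vandermondeProd
        congr 1
        · congr 1
          · apply Finset.prod_congr rfl
            intro a _
            exact (hIoi _ _ a).symm
          · apply Finset.prod_congr rfl
            intro a _
            apply Finset.prod_congr rfl
            intro b _
            rw [Fin.append_right]
        · apply Finset.prod_congr rfl
          intro b _
          exact (hIoi _ _ b).symm
    _ = vandermondeProd x * vandermondeProd y * ∏ i : Fin n, ∏ j : Fin m, (x i - y j) := by
        ring

end Vandermonde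

end DualCauchyAux


open DualCauchyAux in
/-- Dual Cauchy identity, type A ninth variation: for an admissible sequence `F`,
`Σ_{λ ⊆ (mⁿ)} (−1)^{|λ̃|} s_λ^F(x₁,…,xₙ) s_{λ̃}^F(y₁,…,y_m) = ∏_{i,j} (xᵢ − yⱼ)`,
where `λ̃ = (n − λ'_m, …, n − λ'_1)` and `λ'` is the conjugate partition.
Partitions `λ` in the `n × m` rectangle are encoded as weakly decreasing functions
`Fin n → Fin (m+1)`; the conjugate is `λ'_i = #{r : λ_r ≥ i}`. -/
theorem ninth_variation_dual_cauchy {K : Type*} [Field K] {n m : ℕ}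
    (F : ℕ → Polynomial K) (hmonic : ∀ k, (F k).Monic)
    (hdeg : ∀ k, (F k).natDegree = k) (hF0 : F 0 = 1)
    (x : Fin n → K) (y : Fin m → K)
    (hVx : vandermondeProd x ≠ 0) (hVy : vandermondeProd y ≠ 0) :
    ∑ l : {l : Fin n → Fin (m + 1) // ∀ i j : Fin n, i ≤ j → l j ≤ l i},
        ((-1 : K) ^
            (∑ j : Fin m, (n -
              (Finset.univ.filter fun r : Fin n =>
                (m - 1 - (j : ℕ)) + 1 ≤ (l.1 r : ℕ)).card)) *
          genSchur F x (fun i => (l.1 i : ℕ)) *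
          genSchur F y (fun j => n -
            (Finset.univ.filter fun r : Fin n =>
              (m - 1 - (j : ℕ)) + 1 ≤ (l.1 r : ℕ)).card)) =
      ∏ i : Fin n, ∏ j : Fin m, (x i - y j) := by
  classical
  have hsign : ∀ l : {l : Fin n → Fin (m + 1) // ∀ i j : Fin n, i ≤ j → l j ≤ l i},
      ((Equiv.Perm.sign (shufflePerm l.1 l.2) : ℤ) : K) =
        (-1 : K) ^ (∑ j : Fin m, (n - cnt l.1 ((m - 1 - (j : ℕ)) + 1))) := by
    intro l
    rw [sign_shufflePerm l.2]
    push_cast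
    rfl
  have key : ∀ l : {l : Fin n → Fin (m + 1) // ∀ i j : Fin n, i ≤ j → l j ≤ l i},
      ((-1 : K) ^
            (∑ j : Fin m, (n -
              (Finset.univ.filter fun r : Fin n =>
                (m - 1 - (j : ℕ)) + 1 ≤ (l.1 r : ℕ)).card)) *
          genSchur F x (fun i => (l.1 i : ℕ)) *
          genSchur F y (fun j => n -
            (Finset.univ.filter fun r : Fin n =>
              (m - 1 - (j : ℕ)) + 1 ≤ (l.1 r : ℕ)).card))
        = (((Equiv.Perm.sign (shufflePerm l.1 l.2) : ℤ) : K)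
            * (Matrix.of fun i j : Fin n =>
                (F ((l.1 j : ℕ) + (n - 1 - (j : ℕ)))).eval (x i)).det
            * (Matrix.of fun i j : Fin m =>
                (F ((n - cnt l.1 ((m - 1 - (j : ℕ)) + 1)) + (m - 1 - (j : ℕ)))).eval (y i)).det)
          / (vandermondeProd x * vandermondeProd y) := by
    intro l
    rw [hsign l]
    simp only [genSchur, cnt]
    rw [mul_assoc, div_mul_div_comm, ← mul_div_assoc, mul_assoc]
  calc
    ∑ l : {l : Fin n → Fin (m + 1) // ∀ i j : Fin n, i ≤ j → l j ≤ l i},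
        ((-1 : K) ^
            (∑ j : Fin m, (n -
              (Finset.univ.filter fun r : Fin n =>
                (m - 1 - (j : ℕ)) + 1 ≤ (l.1 r : ℕ)).card)) *
          genSchur F x (fun i => (l.1 i : ℕ)) *
          genSchur F y (fun j => n -
            (Finset.univ.filter fun r : Fin n =>
              (m - 1 - (j : ℕ)) + 1 ≤ (l.1 r : ℕ)).card))
      = (∑ l : {l : Fin n → Fin (m + 1) // ∀ i j : Fin n, i ≤ j → l j ≤ l i},
          (((Equiv.Perm.sign (shufflePerm l.1 l.2) : ℤ) : K)
            * (Matrix.of fun i j : Fin n =>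
                (F ((l.1 j : ℕ) + (n - 1 - (j : ℕ)))).eval (x i)).det
            * (Matrix.of fun i j : Fin m =>
                (F ((n - cnt l.1 ((m - 1 - (j : ℕ)) + 1)) + (m - 1 - (j : ℕ)))).eval (y i)).det))
          / (vandermondeProd x * vandermondeProd y) := by
        rw [Finset.sum_div]
        exact Finset.sum_congr rfl (fun l _ => key l)
    _ = ∏ i : Fin n, ∏ j : Fin m, (x i - y j) := by
        rw [← det_expand F x y, det_M_eq F hmonic hdeg (Fin.append x y),
          vandermondeProd_append x y]
        rw [mul_div_assoc]
        rw [mul_comm, div_mul_cancel₀ _ (mul_ne_zero hVx hVy)]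
end

section
/- (Factorial complete homogeneous generating function) For the factorial Schur polynomials in n variables, with h_k(x|c) = s_{(k,0,…,0)}(x|c): Σ_{k=0}^∞ h_k(x|c) · t^k / ∏_{l=0}^{k+n−1} (1 − t c_l) = 1 / ∏_{i=1}^n (1 − x_i t), as formal power series in t. -/
/-- The factorial power `(x|c)^k = (x − c₀)⋯(x − c_{k−1})`. -/
def factPow {K : Type*} [Field K] (x : K) (c : ℕ → K) (k : ℕ) : K :=
  ∏ i ∈ Finset.range k, (x - c i)

/-- The complete factorial symmetric polynomial
`h_k(x|c) = s_{(k,0,…,0)}(x|c) = det[(xᵢ|c)^{λⱼ+n−j}]/V(x)` for `λ = (k,0,…,0)`. -/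
noncomputable def hFactorial {K : Type*} [Field K] {n : ℕ} (x : Fin n → K) (c : ℕ → K)
    (k : ℕ) : K :=
  (Matrix.of fun i j : Fin n =>
      factPow (x i) c ((if (j : ℕ) = 0 then k else 0) + (n - 1 - (j : ℕ)))).det /
    vandermondeProd x


open Finset PowerSeries

section HFactAux

variable {K : Type*} [Field K]

lemma factPow_zero (y : K) (c : ℕ → K) : factPow y c 0 = 1 := by simp [factPow]

lemma factPow_succ (y : K) (c : ℕ → K) (k : ℕ) :
    factPow y c (k+1) = factPow y c k * (y - c k) := Finset.prod_range_succ _ _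

lemma telescope (y : K) (c : ℕ → K) (N : ℕ) :
    (1 - C y * X) *
      ∑ m ∈ range N, C (factPow y c m) * X ^ m * ∏ l ∈ Ico (m+1) N, (1 - C (c l) * X)
    = (∏ l ∈ range N, (1 - C (c l) * X)) - C (factPow y c N) * X ^ N := by
  induction N with
  | zero => simp [factPow_zero]
  | succ N ih =>
    have hsplit : ∀ m ∈ range N,
        C (factPow y c m) * X ^ m * ∏ l ∈ Ico (m+1) (N+1), (1 - C (c l) * X)
        = (C (factPow y c m) * X ^ m * ∏ l ∈ Ico (m+1) N, (1 - C (c l) * X)) *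
            (1 - C (c N) * X) := by
      intro m hm
      rw [Finset.prod_Ico_succ_top (by simp at hm; omega : m+1 ≤ N)]
      ring
    rw [Finset.sum_range_succ, Finset.sum_congr rfl hsplit, ← Finset.sum_mul,
      Finset.Ico_self, Finset.prod_empty, Finset.prod_range_succ, factPow_succ, map_mul,
      map_sub, pow_succ]
    linear_combination (1 - C (c N) * X) * ih


lemma det_base {n : ℕ} (x : Fin n → K) (c : ℕ → K) :
    (Matrix.of fun i j : Fin n => factPow (x i) c (n - 1 - (j : ℕ))).det
      = vandermondeProd x := by
  have key : (Matrix.of fun i j : Fin n => factPow (x i) c (n - 1 - (j : ℕ)))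
      = (Matrix.of fun i j : Fin n =>
          Polynomial.eval ((x ∘ Fin.rev) i)
            (∏ l ∈ range (j : ℕ), (Polynomial.X - Polynomial.C (c l)))).submatrix
          Fin.revPerm Fin.revPerm := by
    ext i j
    simp only [Matrix.submatrix_apply, Matrix.of_apply, Fin.revPerm_apply, Function.comp_apply,
      Fin.rev_rev, Polynomial.eval_prod, Polynomial.eval_sub, Polynomial.eval_X,
      Polynomial.eval_C]
    rw [Fin.val_rev]
    have hh : n - 1 - (j : ℕ) = n - ((j : ℕ) + 1) := by omega
    rw [factPow, hh]
  rw [key, Matrix.det_submatrix_equiv_self,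
    ← Matrix.det_eval_matrixOfPolynomials_eq_det_vandermonde (x ∘ Fin.rev)
      (fun j => ∏ l ∈ range (j : ℕ), (Polynomial.X - Polynomial.C (c l)))
      (fun j => by
        rw [Polynomial.natDegree_prod_of_monic _ _ (fun l _ => Polynomial.monic_X_sub_C _)]
        simp)
      (fun j => Polynomial.monic_prod_of_monic _ _ (fun l _ => Polynomial.monic_X_sub_C _)),
    Matrix.det_vandermonde]
  unfold vandermondeProd
  rw [Finset.prod_sigma', Finset.prod_sigma']
  refine Finset.prod_nbij' (fun p => ⟨Fin.rev p.2, Fin.rev p.1⟩)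
    (fun p => ⟨Fin.rev p.2, Fin.rev p.1⟩) ?_ ?_ ?_ ?_ ?_
  · rintro ⟨a, b⟩ hab
    simp only [Finset.mem_sigma, Finset.mem_univ, Finset.mem_Ioi, true_and] at hab ⊢
    exact Fin.rev_lt_rev.mpr hab
  · rintro ⟨a, b⟩ hab
    simp only [Finset.mem_sigma, Finset.mem_univ, Finset.mem_Ioi, true_and] at hab ⊢
    exact Fin.rev_lt_rev.mpr hab
  · rintro ⟨a, b⟩ _; simp [Fin.rev_rev]
  · rintro ⟨a, b⟩ _; simp [Fin.rev_rev]
  · rintro ⟨a, b⟩ _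
    simp [Function.comp_apply]

lemma det_updateCol_eq_sum {S : Type*} [CommRing S] {n : ℕ} (B : Matrix (Fin n) (Fin n) S)
    (j0 : Fin n) (y : Fin n → S) :
    (B.updateCol j0 y).det = ∑ i, y i * (B.updateCol j0 (Pi.single i 1)).det := by
  have h : y = ∑ i : Fin n, y i • (Pi.single i (1 : S) : Fin n → S) := by
    funext j
    simp [Finset.sum_apply, Pi.single_apply]
  rw [← Matrix.cramer_apply]
  conv_lhs => rw [h]
  rw [map_sum, Finset.sum_apply]
  refine Finset.sum_congr rfl fun i _ => ?_
  rw [map_smul, Pi.smul_apply, smul_eq_mul, Matrix.cramer_apply]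

lemma detA {S : Type*} [CommRing S] {m : ℕ} (w : Fin (m+1) → S) (z : S) :
    (Matrix.of fun i j : Fin (m+1) =>
        if (j : ℕ) = 0 then (if (i : ℕ) = m then (1:S) else 0)
        else (if i = j then w j else 0) + (if (i : ℕ) + 1 = (j : ℕ) then z else 0)).det
      = (-1) ^ m * z ^ m := by
  rw [Matrix.det_succ_column_zero, Finset.sum_eq_single (Fin.last m)]
  · have h1 : (Matrix.of fun i j : Fin (m+1) =>
        if (j : ℕ) = 0 then (if (i : ℕ) = m then (1:S) else 0)
        else (if i = j then w j else 0) + (if (i : ℕ) + 1 = (j : ℕ) then z else 0))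
        (Fin.last m) 0 = 1 := by simp
    rw [h1, Fin.succAbove_last, mul_one]
    have h2 : (((Matrix.of fun i j : Fin (m+1) =>
        if (j : ℕ) = 0 then (if (i : ℕ) = m then (1:S) else 0)
        else (if i = j then w j else 0) + (if (i : ℕ) + 1 = (j : ℕ) then z else 0)).submatrix
          Fin.castSucc Fin.succ)).det = z ^ m := by
      rw [Matrix.det_of_lowerTriangular]
      · have hd : ∀ q : Fin m, ((Matrix.of fun i j : Fin (m+1) =>
            if (j : ℕ) = 0 then (if (i : ℕ) = m then (1:S) else 0)
            else (if i = j then w j else 0) + (if (i : ℕ) + 1 = (j : ℕ) then z else 0)).submatrix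
              Fin.castSucc Fin.succ) q q = z := by
          intro q
          have hq2 : ¬(Fin.castSucc q = Fin.succ q) := by
            simp only [Fin.ext_iff, Fin.coe_castSucc, Fin.val_succ]; omega
          simp [hq2]
        rw [Finset.prod_congr rfl (fun q _ => hd q)]
        simp
      · intro p q hpq
        have hpq0 : p < q := OrderDual.toDual_lt_toDual.mp hpq
        have hpq' : (p : ℕ) < (q : ℕ) := hpq0
        have h2 : ¬(Fin.castSucc p = Fin.succ q) := by
          simp only [Fin.ext_iff, Fin.coe_castSucc, Fin.val_succ]; omega
        have h3 : ¬((p : ℕ) + 1 = (q : ℕ) + 1) := by omega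
        simp [h2, h3, hpq'.ne]
    rw [h2, Fin.val_last]
  · intro i _ hne
    have : ¬((i : ℕ) = m) := by
      intro hv
      exact hne (Fin.ext (by simp [hv]))
    simp [this]
  · simp

variable {n : ℕ}

/-- matrix with columns (x_i|c)^{n-1-j} -/
def baseM (n : ℕ) (x : Fin n → K) (c : ℕ → K) : Matrix (Fin n) (Fin n) K :=
  Matrix.of fun i j => factPow (x i) c (n - 1 - (j : ℕ))

/-- cofactors along column 0 -/
noncomputable def cofK (hn : 0 < n) (x : Fin n → K) (c : ℕ → K) (i : Fin n) : K :=
  ((baseM n x c).updateCol ⟨0, hn⟩ (Pi.single i 1)).det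

lemma updateCol_base (hn : 0 < n) (x : Fin n → K) (c : ℕ → K) (k : ℕ) :
    (Matrix.of fun i j : Fin n =>
        factPow (x i) c ((if (j : ℕ) = 0 then k else 0) + (n - 1 - (j : ℕ))))
      = (baseM n x c).updateCol ⟨0, hn⟩ (fun i => factPow (x i) c (k + (n - 1))) := by
  ext i j
  by_cases hj : j = (⟨0, hn⟩ : Fin n)
  · subst hj
    simp [Matrix.updateCol_apply]
  · have hjv : ¬((j : ℕ) = 0) := fun hv => hj (Fin.ext hv)
    simp [Matrix.updateCol_apply, hj, hjv, baseM]

lemma hFact_eq (hn : 0 < n) (x : Fin n → K) (c : ℕ → K) (hV : vandermondeProd x ≠ 0) (k : ℕ) :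
    vandermondeProd x * hFactorial x c k
      = ∑ i, factPow (x i) c (k + (n - 1)) * cofK hn x c i := by
  rw [hFactorial, mul_comm, div_mul_cancel₀ _ hV, updateCol_base hn x c k,
    det_updateCol_eq_sum]
  rfl

lemma sum_cof_low (hn : 0 < n) (x : Fin n → K) (c : ℕ → K) {m : ℕ} (hm : m < n - 1) :
    ∑ i, factPow (x i) c m * cofK hn x c i = 0 := by
  simp only [cofK]
  rw [← det_updateCol_eq_sum (baseM n x c) ⟨0, hn⟩ (fun i => factPow (x i) c m)]
  refine Matrix.det_zero_of_column_eq (i := (⟨n - 1 - m, by omega⟩ : Fin n))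
    (j := (⟨0, hn⟩ : Fin n)) (by simp [Fin.ext_iff]; omega) ?_
  intro i
  rw [Matrix.updateCol_apply, Matrix.updateCol_apply, if_neg (by simp [Fin.ext_iff]; omega),
    if_pos rfl]
  simp only [baseM, Matrix.of_apply]
  congr 2
  omega


lemma star_lemma (hn : 0 < n) (x : Fin n → K) (c : ℕ → K) :
    ∑ i, C (cofK hn x c i) * ∏ i' ∈ univ.erase i, (1 - C (x i') * X)
      = C (vandermondeProd x) * X ^ (n - 1) := by
  obtain ⟨m, rfl⟩ : ∃ m, n = m + 1 := ⟨n - 1, by omega⟩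
  set g : Fin (m+1) → PowerSeries K := fun i => 1 - C (x i) * X with hg
  have hgc : ∀ i, constantCoeff (g i) = 1 := by
    intro i; simp [hg]
  have hginv : ∀ i, g i * (g i)⁻¹ = 1 := fun i =>
    PowerSeries.mul_inv_cancel _ (by rw [hgc]; exact one_ne_zero)
  have herase : ∀ i, ∏ i' ∈ univ.erase i, g i' = (∏ i', g i') * (g i)⁻¹ := by
    intro i
    rw [← Finset.prod_erase_mul univ g (mem_univ i), mul_assoc, hginv, mul_one]
  set BR : Matrix (Fin (m+1)) (Fin (m+1)) (PowerSeries K) := (baseM (m+1) x c).map (C (R := K)) with hBR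
  have hBRa : ∀ i k, BR i k = C (factPow (x i) c (m + 1 - 1 - (k : ℕ))) := by
    intro i k; simp [hBR, baseM, Matrix.map_apply]
  have hcof : ∀ i, (C (R := K)) (cofK hn x c i) = (BR.updateCol ⟨0, hn⟩ (Pi.single i 1)).det := by
    intro i
    rw [cofK, RingHom.map_det]
    congr 1
    refine Matrix.ext fun a b => ?_
    by_cases hb : b = (⟨0, hn⟩ : Fin (m+1))
    · simp [Matrix.updateCol_apply, hb, Matrix.map_apply, Pi.single_apply,
        apply_ite (C (R := K)), RingHom.mapMatrix_apply]
    · have hb' : ¬ b = 0 := by simpa using hb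
      simp [Matrix.updateCol_apply, hb', Matrix.map_apply, hBR,
        RingHom.mapMatrix_apply]
  set AA : Matrix (Fin (m+1)) (Fin (m+1)) (PowerSeries K) := Matrix.of fun i j =>
    if (j : ℕ) = 0 then (if (i : ℕ) = m then (1 : PowerSeries K) else 0)
    else (if i = j then 1 - C (c (m + 1 - 1 - (j : ℕ))) * X else 0) +
      (if (i : ℕ) + 1 = (j : ℕ) then -X else 0) with hAA
  calc ∑ i, C (cofK hn x c i) * ∏ i' ∈ univ.erase i, g i'
      = (∏ i', g i') * ∑ i, (g i)⁻¹ * (BR.updateCol ⟨0, hn⟩ (Pi.single i 1)).det := by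
        rw [Finset.mul_sum]
        refine sum_congr rfl fun i _ => ?_
        rw [hcof, herase]; ring
    _ = (∏ i', g i') * (BR.updateCol ⟨0, hn⟩ (fun i => (g i)⁻¹)).det := by
        rw [det_updateCol_eq_sum]
    _ = (Matrix.of fun i j => g i * (BR.updateCol ⟨0, hn⟩ (fun i' => (g i')⁻¹)) i j).det := by
        rw [Matrix.det_mul_column]
    _ = (BR * AA).det := by
        congr 1
        refine Matrix.ext fun i j => ?_
        rw [Matrix.mul_apply, Matrix.of_apply]
        by_cases hj : (j : ℕ) = 0
        · have hj' : j = (⟨0, hn⟩ : Fin (m+1)) := Fin.ext hj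
          subst hj'
          rw [Matrix.updateCol_apply, if_pos rfl, hginv]
          rw [Finset.sum_eq_single (Fin.last m)]
          · have h0 : m + 1 - 1 - m = 0 := by omega
            rw [hBRa]
            simp [hAA, h0, factPow_zero]
          · intro k _ hk
            have hkv : ¬((k : ℕ) = m) := fun hv => hk (Fin.ext (by simp [hv]))
            simp [hAA, hkv]
          · simp
        · have hj' : j ≠ (⟨0, hn⟩ : Fin (m+1)) := fun hh => hj (by rw [hh])
          rw [Matrix.updateCol_apply, if_neg hj']
          have hsplit : ∀ k, BR i k * AA k j
              = (if k = j then BR i k * (1 - C (c (m + 1 - 1 - (j : ℕ))) * X) else 0)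
                + (if (k : ℕ) + 1 = (j : ℕ) then BR i k * (-X) else 0) := by
            intro k
            rw [hAA]
            simp only [Matrix.of_apply, if_neg hj, mul_add, mul_ite, mul_zero]
          rw [Finset.sum_congr rfl (fun k _ => hsplit k), Finset.sum_add_distrib,
            Finset.sum_ite_eq' univ j, if_pos (mem_univ j)]
          have hjlt : (j : ℕ) < m + 1 := j.isLt
          have e1 : m + 1 - 1 - ((j : ℕ) - 1) = (m + 1 - 1 - (j : ℕ)) + 1 := by omega
          rw [Finset.sum_eq_single (⟨(j : ℕ) - 1, by omega⟩ : Fin (m+1))]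
          · rw [if_pos (show ((⟨(j : ℕ) - 1, by omega⟩ : Fin (m+1)) : ℕ) + 1 = (j : ℕ) by
              show ((j : ℕ) - 1) + 1 = (j : ℕ); omega)]
            have hb2 : BR i (⟨(j : ℕ) - 1, by omega⟩ : Fin (m+1))
                = C (factPow (x i) c (m + 1 - 1 - (j : ℕ))
                    * (x i - c (m + 1 - 1 - (j : ℕ)))) := by
              rw [hBRa]
              show C (factPow (x i) c (m + 1 - 1 - ((j : ℕ) - 1))) = _
              rw [e1, factPow_succ]
            rw [hb2, hBRa i j, map_mul, map_sub]
            simp only [hg]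
            ring
          · intro k _ hk
            rw [if_neg (fun hv => hk (Fin.ext (show (k : ℕ) = (j : ℕ) - 1 by omega)))]
          · simp
    _ = C (vandermondeProd x) * X ^ (m + 1 - 1) := by
        rw [Matrix.det_mul, hBR, ← RingHom.mapMatrix_apply, ← RingHom.map_det]
        have : (baseM (m+1) x c).det = vandermondeProd x := det_base x c
        rw [this, hAA, detA, ← mul_pow]
        simp

lemma heart (hn : 0 < n) (x : Fin n → K) (c : ℕ → K) (hV : vandermondeProd x ≠ 0) (N : ℕ) :
    (∏ i, (1 - C (x i) * X)) *
      (C (vandermondeProd x) * (X ^ (n-1) *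
        ∑ k ∈ range (N+1), C (hFactorial x c k) * X ^ k *
          ∏ l ∈ Ico (k+n) (N+n), (1 - C (c l) * X)))
    = C (vandermondeProd x) * (X ^ (n-1) * ∏ l ∈ range (N+n), (1 - C (c l) * X))
      - X ^ (N+n) * ∑ i, C (cofK hn x c i) * C (factPow (x i) c (N+n)) *
          ∏ i' ∈ univ.erase i, (1 - C (x i') * X) := by
  set g : Fin n → PowerSeries K := fun i => 1 - C (x i) * X with hg
  set u : ℕ → PowerSeries K := fun l => 1 - C (c l) * X with hu
  set r : Fin n → ℕ → PowerSeries K :=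
    fun i e => C (factPow (x i) c e) * X ^ e * ∏ l ∈ Ico (e+1) (N+n), u l with hr
  have herase : ∀ i, (∏ i' ∈ univ.erase i, g i') * g i = ∏ i', g i' :=
    fun i => Finset.prod_erase_mul univ g (mem_univ i)
  -- Step A
  have stepA : C (vandermondeProd x) * (X ^ (n-1) *
      ∑ k ∈ range (N+1), C (hFactorial x c k) * X ^ k * ∏ l ∈ Ico (k+n) (N+n), u l)
      = ∑ i, C (cofK hn x c i) * ∑ k ∈ range (N+1), r i (k + (n-1)) := by
    rw [mul_sum, mul_sum]
    have hterm : ∀ k ∈ range (N+1), C (vandermondeProd x) * (X ^ (n-1) *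
        (C (hFactorial x c k) * X ^ k * ∏ l ∈ Ico (k+n) (N+n), u l))
        = ∑ i, C (cofK hn x c i) * r i (k + (n-1)) := by
      intro k _
      have h1 : C (vandermondeProd x) * (X ^ (n-1) *
          (C (hFactorial x c k) * X ^ k * ∏ l ∈ Ico (k+n) (N+n), u l))
          = C (vandermondeProd x * hFactorial x c k) *
            (X ^ (k + (n-1)) * ∏ l ∈ Ico (k+n) (N+n), u l) := by
        rw [map_mul, pow_add]; ring
      rw [h1, hFact_eq hn x c hV k, map_sum, Finset.sum_mul]
      refine sum_congr rfl fun i _ => ?_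
      have h2 : k + (n-1) + 1 = k + n := by omega
      simp only [hr]
      rw [h2, map_mul]
      ring
    rw [Finset.sum_congr rfl hterm, Finset.sum_comm]
    exact sum_congr rfl fun i _ => by rw [Finset.mul_sum]
  -- Step B
  have stepB : ∀ i, ∑ k ∈ range (N+1), r i (k + (n-1))
      = (∑ e ∈ range (N+n), r i e) - ∑ e ∈ range (n-1), r i e := by
    intro i
    have hsp := Finset.sum_range_add_sum_Ico (r i) (show n - 1 ≤ N + n by omega)
    have hIco : ∑ e ∈ Ico (n-1) (N+n), r i e = ∑ k ∈ range (N+1), r i (k + (n-1)) := by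
      rw [Finset.sum_Ico_eq_sum_range]
      have hNn : N + n - (n-1) = N + 1 := by omega
      rw [hNn]
      exact sum_congr rfl fun k _ => by rw [Nat.add_comm]
    rw [← hIco, eq_sub_iff_add_eq, add_comm]
    exact hsp
  -- telescope
  have stepC : ∀ i, g i * ∑ e ∈ range (N+n), r i e
      = (∏ l ∈ range (N+n), u l) - C (factPow (x i) c (N+n)) * X ^ (N+n) :=
    fun i => telescope (x i) c (N+n)
  -- B vanishes
  have stepD : ∑ i, C (cofK hn x c i) * ((∏ i', g i') * ∑ e ∈ range (n-1), r i e) = 0 := by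
    have : ∀ i, C (cofK hn x c i) * ((∏ i', g i') * ∑ e ∈ range (n-1), r i e)
        = ∑ e ∈ range (n-1), (∏ i', g i') * (X ^ e * ∏ l ∈ Ico (e+1) (N+n), u l) *
            C (factPow (x i) c e * cofK hn x c i) := by
      intro i
      rw [mul_sum, mul_sum]
      refine sum_congr rfl fun e _ => ?_
      rw [hr, map_mul]
      ring
    rw [Finset.sum_congr rfl fun i _ => this i, Finset.sum_comm]
    refine Finset.sum_eq_zero fun e he => ?_
    rw [← Finset.mul_sum, ← map_sum, sum_cof_low hn x c (mem_range.mp he), map_zero, mul_zero]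
  -- assemble
  calc (∏ i', g i') * (C (vandermondeProd x) * (X ^ (n-1) *
        ∑ k ∈ range (N+1), C (hFactorial x c k) * X ^ k * ∏ l ∈ Ico (k+n) (N+n), u l))
      = ∑ i, C (cofK hn x c i) *
          ((∏ i' ∈ univ.erase i, g i') * (g i * ∑ e ∈ range (N+n), r i e))
        - ∑ i, C (cofK hn x c i) * ((∏ i', g i') * ∑ e ∈ range (n-1), r i e) := by
        rw [stepA, Finset.mul_sum, ← Finset.sum_sub_distrib]
        refine sum_congr rfl fun i _ => ?_
        rw [stepB i]
        have : (∏ i' ∈ univ.erase i, g i') * (g i * ∑ e ∈ range (N+n), r i e)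
            = (∏ i', g i') * ∑ e ∈ range (N+n), r i e := by
          rw [← herase i]; ring
        rw [this]
        ring
    _ = ∑ i, C (cofK hn x c i) * ((∏ i' ∈ univ.erase i, g i') *
          ((∏ l ∈ range (N+n), u l) - C (factPow (x i) c (N+n)) * X ^ (N+n))) := by
        rw [stepD, sub_zero]
        exact sum_congr rfl fun i _ => by rw [stepC i]
    _ = (∏ l ∈ range (N+n), u l) *
          (∑ i, C (cofK hn x c i) * ∏ i' ∈ univ.erase i, g i')
        - X ^ (N+n) * ∑ i, C (cofK hn x c i) * C (factPow (x i) c (N+n)) *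
            ∏ i' ∈ univ.erase i, g i' := by
        rw [Finset.mul_sum, Finset.mul_sum, ← Finset.sum_sub_distrib]
        exact sum_congr rfl fun i _ => by ring
    _ = C (vandermondeProd x) * (X ^ (n-1) * ∏ l ∈ range (N+n), u l)
        - X ^ (N+n) * ∑ i, C (cofK hn x c i) * C (factPow (x i) c (N+n)) *
            ∏ i' ∈ univ.erase i, g i' := by
        rw [star_lemma hn x c]
        ring

lemma key_coeff (hn : 0 < n) (x : Fin n → K) (c : ℕ → K) (hV : vandermondeProd x ≠ 0)
    (N d : ℕ) (hd : d ≤ N) :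
    coeff d (∑ k ∈ range (N+1), C (hFactorial x c k) * X ^ k *
      (∏ l ∈ range (k+n), (1 - C (c l) * X))⁻¹)
    = coeff d (∏ i, (1 - C (x i) * X))⁻¹ := by
  have hheart := heart hn x c hV N
  set u : ℕ → PowerSeries K := fun l => 1 - C (c l) * X with hu
  set G : PowerSeries K := ∏ i, (1 - C (x i) * X) with hG
  have hconstu : ∀ M : ℕ, constantCoeff (∏ l ∈ range M, u l) = 1 := by
    intro M
    rw [map_prod]
    refine Finset.prod_eq_one fun l _ => ?_
    simp [hu]
  have hconstG : constantCoeff G = 1 := by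
    rw [hG, map_prod]
    refine Finset.prod_eq_one fun i _ => ?_
    simp
  have hGinv : G⁻¹ * G = 1 :=
    PowerSeries.inv_mul_cancel _ (by rw [hconstG]; exact one_ne_zero)
  set S : PowerSeries K := ∑ k ∈ range (N+1), C (hFactorial x c k) * X ^ k *
    (∏ l ∈ range (k+n), u l)⁻¹ with hS
  set P : PowerSeries K := ∏ l ∈ range (N+n), u l with hP
  set T : PowerSeries K := ∑ k ∈ range (N+1), C (hFactorial x c k) * X ^ k *
    ∏ l ∈ Ico (k+n) (N+n), u l with hT
  set D : PowerSeries K := ∑ i, C (cofK hn x c i) * C (factPow (x i) c (N+n)) *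
    ∏ i' ∈ univ.erase i, (1 - C (x i') * X) with hD
  have hPinv : ∀ k : ℕ, (∏ l ∈ range (k+n), u l)⁻¹ * (∏ l ∈ range (k+n), u l) = 1 :=
    fun k => PowerSeries.inv_mul_cancel _ (by rw [hconstu]; exact one_ne_zero)
  have hPS : P * S = T := by
    rw [hS, hT, mul_sum]
    refine sum_congr rfl fun k hk => ?_
    have hk' : k + n ≤ N + n := by
      have := mem_range.mp hk; omega
    have hsplitP : P = (∏ l ∈ range (k+n), u l) * ∏ l ∈ Ico (k+n) (N+n), u l :=
      (Finset.prod_range_mul_prod_Ico u hk').symm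
    calc P * (C (hFactorial x c k) * X ^ k * (∏ l ∈ range (k+n), u l)⁻¹)
        = ((∏ l ∈ range (k+n), u l)⁻¹ * ∏ l ∈ range (k+n), u l) *
            (C (hFactorial x c k) * X ^ k * ∏ l ∈ Ico (k+n) (N+n), u l) := by
          rw [hsplitP]; ring
      _ = C (hFactorial x c k) * X ^ k * ∏ l ∈ Ico (k+n) (N+n), u l := by
          rw [hPinv k, one_mul]
  have hconstP : constantCoeff P = 1 := by rw [hP]; exact hconstu (N+n)
  have hPinvP : P * P⁻¹ = 1 :=
    PowerSeries.mul_inv_cancel _ (by rw [hconstP]; exact one_ne_zero)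
  have hmain : ∀ d' : ℕ, d' ≤ N → coeff d' (G * S - 1) = 0 := by
    intro d' hd'
    have e0 : C (vandermondeProd x) * (X ^ (n-1) * (P * (G * S - 1)))
        = -(X ^ (N+n) * D) := by
      linear_combination hheart + (C (vandermondeProd x) * X ^ (n-1) * G) * hPS
    have h2 : C (vandermondeProd x) * ((G * S - 1) * X ^ (n-1))
        = -(X ^ (N+n) * (D * P⁻¹)) := by
      calc C (vandermondeProd x) * ((G * S - 1) * X ^ (n-1))
          = C (vandermondeProd x) * ((G * S - 1) * X ^ (n-1)) * (P * P⁻¹) := by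
            rw [hPinvP, mul_one]
        _ = (C (vandermondeProd x) * (X ^ (n-1) * (P * (G * S - 1)))) * P⁻¹ := by ring
        _ = -(X ^ (N+n) * D) * P⁻¹ := by rw [e0]
        _ = -(X ^ (N+n) * (D * P⁻¹)) := by ring
    have h3 := congrArg (coeff (d' + (n-1))) h2
    rw [coeff_C_mul, coeff_mul_X_pow, map_neg, coeff_X_pow_mul', if_neg (by omega),
      neg_zero] at h3
    exact (mul_eq_zero.mp h3).resolve_left hV
  have h5 : S - G⁻¹ = G⁻¹ * (G * S - 1) := by
    rw [mul_sub, ← mul_assoc, hGinv, one_mul, mul_one]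
  have h6 : coeff d (S - G⁻¹) = 0 := by
    rw [h5, PowerSeries.coeff_mul]
    refine Finset.sum_eq_zero fun p hp => ?_
    have hp2 : p.2 ≤ N := by
      have := Finset.HasAntidiagonal.mem_antidiagonal.mp hp
      omega
    rw [hmain p.2 hp2, mul_zero]
  rw [map_sub, sub_eq_zero] at h6
  exact h6

end HFactAux

/-- Generating function for the complete factorial symmetric polynomials:
`Σ_{k≥0} h_k(x|c) · t^k/∏_{l=0}^{k+n−1}(1 − t c_l) = 1/∏_{i=1}^n (1 − xᵢ t)`
as formal power series in `t`. -/
theorem hFactorial_generating_function {K : Type*} [Field K] {n : ℕ} (hn : 0 < n)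
    (x : Fin n → K) (c : ℕ → K) (hV : vandermondeProd x ≠ 0) :
    ∑' k : ℕ,
        (PowerSeries.C (R := K) (hFactorial x c k) * (PowerSeries.X : PowerSeries K) ^ k *
          (∏ l ∈ Finset.range (k + n), (1 - PowerSeries.C (R := K) (c l) * PowerSeries.X))⁻¹) =
      (∏ i : Fin n, (1 - PowerSeries.C (R := K) (x i) * PowerSeries.X))⁻¹ := by
  classical
  set F : ℕ → PowerSeries K := fun k => C (hFactorial x c k) * X ^ k *
    (∏ l ∈ range (k+n), (1 - C (c l) * X))⁻¹ with hF
  have hFzero : ∀ D k : ℕ, D < k → coeff D (F k) = 0 := by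
    intro D k hDk
    have h1 : F k = X ^ k * (C (hFactorial x c k) *
        (∏ l ∈ range (k+n), (1 - C (c l) * X))⁻¹) := by rw [hF]; ring
    rw [h1, coeff_X_pow_mul', if_neg (by omega)]
  have happ : ∀ (f : PowerSeries K) (dd : Unit →₀ ℕ), f dd = coeff (dd ()) f := by
    intro f dd
    conv_lhs => rw [Finsupp.unique_single dd]
    rfl
  have hhs : HasSum F (∏ i : Fin n, (1 - C (x i) * X))⁻¹ := by
    have htend : Filter.Tendsto (fun s : Finset ℕ => ∑ b ∈ s, F b) Filter.atTop
        (nhds ((∏ i : Fin n, (1 - C (x i) * X))⁻¹)) := by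
      letI : TopologicalSpace K := ⊥
      refine tendsto_pi_nhds.mpr fun dd => ?_
      refine tendsto_nhds_of_eventually_eq ?_
      refine Filter.eventually_atTop.mpr ⟨range (dd () + 1), fun s hs => ?_⟩
      rw [happ (∑ b ∈ s, F b) dd, happ ((∏ i : Fin n, (1 - C (x i) * X))⁻¹) dd, map_sum]
      calc ∑ k ∈ s, coeff (dd ()) (F k)
          = ∑ k ∈ range (dd () + 1), coeff (dd ()) (F k) := by
            refine (Finset.sum_subset hs fun k _ hk => ?_).symm
            exact hFzero _ _ (by simpa using hk)
        _ = coeff (dd ()) (∑ k ∈ range (dd () + 1), F k) := (map_sum _ _ _).symm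
        _ = coeff (dd ()) (∏ i : Fin n, (1 - C (x i) * X))⁻¹ :=
            key_coeff hn x c hV (dd ()) (dd ()) le_rfl
    exact htend
  haveI : T2Space (PowerSeries K) := by
    letI : TopologicalSpace K := ⊥
    haveI : DiscreteTopology K := ⟨rfl⟩
    exact Pi.t2Space
  exact hhs.tsum_eq
end
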